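/- arXiv:2303.02683 — 6 statements merged into one kernel-verified Lean document; each statement's English description precedes it below -/
import Mathlib

section
/- For nonzero polynomials P and R (over a field or ℤ), α(P) ≤ α(P·R), where α(Q) is the minimum over monomials m of Q of maximal total degree of the maximum exponent of any single variable in m. -/
attribute [local instance] Classical.propDecidable

open scoped Pointwise
set_option maxHeartbeats 1000000

/-- `alphaP Q` is the minimum `k` such that some monomial of `Q` with nonzero
coefficient has total degree equal to `Q.totalDegree` and every individual
variable exponent at most `k`. -/
noncomputable def alphaP {n : ℕ} (Q : MvPolynomial (Fin n) ℤ) : ℕ :=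
  sInf {k | ∃ m ∈ Q.support, (∑ i, m i) = Q.totalDegree ∧ ∀ i, m i ≤ k}

open Finsupp in
/-- A deglex-style embedding of monomials into a linearly ordered
cancellative monoid. -/
private noncomputable def DL {n : ℕ} (a : Fin n →₀ ℕ) : ℕ ×ₗ Lex (Fin n →₀ ℕ) :=
  toLex (∑ i, a i, toLex a)

private lemma DL_add {n : ℕ} (a b : Fin n →₀ ℕ) : DL (a + b) = DL a + DL b := by
  have h1 : (∑ i, (a + b) i) = (∑ i, a i) + (∑ i, b i) := by
    simp [Finsupp.add_apply, Finset.sum_add_distrib]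
  unfold DL
  rw [h1]
  rfl

private lemma DL_inj {n : ℕ} : Function.Injective (DL (n := n)) := by
  intro a b h
  unfold DL at h
  have := congrArg (fun x => (ofLex x).2) h
  simpa using this

private lemma sum_eq_fsum {n : ℕ} (a : Fin n →₀ ℕ) :
    (∑ i, a i) = a.sum fun _ e => e := by
  rw [Finsupp.sum_fintype]
  intro i; rfl

private lemma fst_le_of_DL_le {n : ℕ} {x a : Fin n →₀ ℕ} (h : DL x ≤ DL a) :
    (∑ i, x i) ≤ ∑ i, a i := by
  unfold DL at h
  rcases (Prod.Lex.le_iff).mp h with h' | h'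
  · exact le_of_lt h'
  · exact le_of_eq h'.1

private lemma exists_top {n : ℕ} (p : MvPolynomial (Fin n) ℤ) (hp : p ≠ 0) :
    ∃ a ∈ p.support, (∑ i, a i) = p.totalDegree ∧ ∀ x ∈ p.support, DL x ≤ DL a := by
  obtain ⟨a, ha, hmax⟩ :=
    p.support.exists_max_image DL (MvPolynomial.support_nonempty.mpr hp)
  refine ⟨a, ha, le_antisymm ?_ ?_, hmax⟩
  · rw [sum_eq_fsum]
    exact MvPolynomial.le_totalDegree ha
  · apply Finset.sup_le
    intro x hx
    rw [← sum_eq_fsum]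
    exact fst_le_of_DL_le (hmax x hx)

private lemma td_add_le {n : ℕ} (p q : MvPolynomial (Fin n) ℤ)
    (hp : p ≠ 0) (hq : q ≠ 0) :
    p.totalDegree + q.totalDegree ≤ (p * q).totalDegree := by
  obtain ⟨a, ha, hda, hmaxa⟩ := exists_top p hp
  obtain ⟨b, hb, hdb, hmaxb⟩ := exists_top q hq
  have hcoeff : (p * q).coeff (a + b) = p.coeff a * q.coeff b := by
    rw [MvPolynomial.coeff_mul,
      Finset.sum_eq_single_of_mem (a, b) (Finset.HasAntidiagonal.mem_antidiagonal.mpr rfl)]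
    intro x hx hne
    by_cases h1 : p.coeff x.1 = 0
    · rw [h1, zero_mul]
    by_cases h2 : q.coeff x.2 = 0
    · rw [h2, mul_zero]
    exfalso
    have hx1 := hmaxa x.1 (MvPolynomial.mem_support_iff.mpr h1)
    have hx2 := hmaxb x.2 (MvPolynomial.mem_support_iff.mpr h2)
    have hsum : x.1 + x.2 = a + b := Finset.HasAntidiagonal.mem_antidiagonal.mp hx
    have hDL : DL x.1 + DL x.2 = DL a + DL b := by
      rw [← DL_add, ← DL_add, hsum]
    have h1' : DL x.1 = DL a := by
      rcases lt_or_eq_of_le hx1 with h | h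
      · exact absurd hDL (ne_of_lt (add_lt_add_of_lt_of_le h hx2))
      · exact h
    have hxa : x.1 = a := DL_inj h1'
    have hxb : x.2 = b := by
      have h := hsum
      rw [hxa] at h
      exact add_left_cancel h
    exact hne (Prod.ext hxa hxb)
  have hne : (p * q).coeff (a + b) ≠ 0 := by
    rw [hcoeff]
    exact mul_ne_zero (MvPolynomial.mem_support_iff.mp ha)
      (MvPolynomial.mem_support_iff.mp hb)
  calc p.totalDegree + q.totalDegree = ∑ i, (a + b) i := by
        rw [← hda, ← hdb]
        simp [Finsupp.add_apply, Finset.sum_add_distrib]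
    _ ≤ (p * q).totalDegree := by
        rw [sum_eq_fsum]
        exact MvPolynomial.le_totalDegree (MvPolynomial.mem_support_iff.mpr hne)

/-- For nonzero polynomials `P` and `R`, `α(P) ≤ α(P·R)`. -/
theorem alphaP_le_alphaP_mul {n : ℕ} (P R : MvPolynomial (Fin n) ℤ)
    (hP : P ≠ 0) (hR : R ≠ 0) : alphaP P ≤ alphaP (P * R) := by
  have hPR : P * R ≠ 0 := mul_ne_zero hP hR
  have hdeg : (P * R).totalDegree = P.totalDegree + R.totalDegree :=
    le_antisymm (MvPolynomial.totalDegree_mul P R) (td_add_le P R hP hR)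
  obtain ⟨m0, hm0, hd0, _⟩ := exists_top (P * R) hPR
  have hneS : {k | ∃ m ∈ (P * R).support,
      (∑ i, m i) = (P * R).totalDegree ∧ ∀ i, m i ≤ k}.Nonempty := by
    refine ⟨∑ i, m0 i, m0, hm0, hd0, fun i => ?_⟩
    exact Finset.single_le_sum (fun _ _ => Nat.zero_le _) (Finset.mem_univ i)
  obtain ⟨m, hm, hd, hk⟩ := Nat.sInf_mem hneS
  have hmem : m ∈ P.support + R.support := MvPolynomial.support_mul P R hm
  obtain ⟨a, ha, b, hb, hab⟩ := Finset.mem_add.mp hmem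
  unfold alphaP
  apply Nat.sInf_le
  refine ⟨a, ha, ?_, fun i => ?_⟩
  · have h1 : (∑ i, a i) ≤ P.totalDegree := by
      rw [sum_eq_fsum]; exact MvPolynomial.le_totalDegree ha
    have h2 : (∑ i, b i) ≤ R.totalDegree := by
      rw [sum_eq_fsum]; exact MvPolynomial.le_totalDegree hb
    have h3 : (∑ i, a i) + (∑ i, b i) = P.totalDegree + R.totalDegree := by
      rw [← hdeg, ← hd, ← hab]
      simp [Finsupp.add_apply, Finset.sum_add_distrib]
    omega
  · have h : a i ≤ m i := by rw [← hab]; simp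
    exact h.trans (hk i)
end

section
/- If f_G divides f_H (as polynomials), then α(f_G) ≤ α(f_H), hence AT(G) ≤ AT(H). -/
attribute [local instance] Classical.propDecidable

/-- The graph polynomial `∏_{i<j, {v_i,v_j} ∈ E} (x_i - x_j)`. -/
noncomputable def graphPoly {n : ℕ} (G : SimpleGraph (Fin n)) : MvPolynomial (Fin n) ℤ :=
  ∏ p ∈ Finset.univ.filter (fun p : Fin n × Fin n => p.1 < p.2 ∧ G.Adj p.1 p.2),
    (MvPolynomial.X p.1 - MvPolynomial.X p.2)

/-- The Alon–Tarsi number `AT(G) = α(f_G) + 1`. -/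
noncomputable def AT {n : ℕ} (G : SimpleGraph (Fin n)) : ℕ := alphaP (graphPoly G) + 1

open MvPolynomial

private lemma sdeg_eq {n : ℕ} (m : Fin n →₀ ℕ) : (m.sum fun _ e => e) = ∑ i, m i :=
  Finsupp.sum_fintype _ _ (fun _ => rfl)

private lemma fdeg_eq {n : ℕ} (m : Fin n →₀ ℕ) : m.degree = ∑ i, m i := by
  rw [Finsupp.degree, ← sdeg_eq]; rfl

private lemma coeff_zero_of_lt {n : ℕ} {p : MvPolynomial (Fin n) ℤ} {d : Fin n →₀ ℕ}
    (h : p.totalDegree < ∑ i, d i) : MvPolynomial.coeff d p = 0 := by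
  by_contra hc
  have := le_totalDegree (p := p) (s := d) (mem_support_iff.mpr hc)
  rw [sdeg_eq] at this
  omega

private lemma exists_top_monomial {n : ℕ} {p : MvPolynomial (Fin n) ℤ} (hp : p ≠ 0) :
    ∃ m ∈ p.support, (∑ i, m i) = p.totalDegree := by
  obtain ⟨m, hm, hs⟩ := Finset.exists_mem_eq_sup p.support
    (support_nonempty.mpr hp) (fun s => s.sum fun _ e => e)
  exact ⟨m, hm, by rw [← sdeg_eq, ← hs]; rfl⟩

private lemma hc_ne_zero {n : ℕ} {p : MvPolynomial (Fin n) ℤ} (hp : p ≠ 0) :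
    homogeneousComponent p.totalDegree p ≠ 0 := by
  obtain ⟨m, hm, hs⟩ := exists_top_monomial hp
  intro hzero
  have := coeff_homogeneousComponent (n := p.totalDegree) (φ := p) m
  rw [hzero, coeff_zero, fdeg_eq, hs, if_pos rfl] at this
  exact (mem_support_iff.mp hm) this.symm

private lemma coeff_mul_top {n : ℕ} (p q : MvPolynomial (Fin n) ℤ) (m0 : Fin n →₀ ℕ)
    (hm0 : (∑ i, m0 i) = p.totalDegree + q.totalDegree) :
    MvPolynomial.coeff m0 (p * q) = MvPolynomial.coeff m0
      (homogeneousComponent p.totalDegree p * homogeneousComponent q.totalDegree q) := by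
  rw [coeff_mul, coeff_mul]
  refine Finset.sum_congr rfl (fun x hx => ?_)
  rw [Finset.HasAntidiagonal.mem_antidiagonal] at hx
  rw [coeff_homogeneousComponent, coeff_homogeneousComponent]
  have hsum : (∑ i, x.1 i) + (∑ i, x.2 i) = p.totalDegree + q.totalDegree := by
    rw [← hm0, ← Finset.sum_add_distrib]
    exact Finset.sum_congr rfl (fun i _ => by rw [← hx]; rfl)
  rcases lt_trichotomy (∑ i, x.1 i) p.totalDegree with h1 | h1 | h1
  · have h2 : q.totalDegree < ∑ i, x.2 i := by omega
    simp [coeff_zero_of_lt h2, fdeg_eq, h2.ne']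
  · have h2 : (∑ i, x.2 i) = q.totalDegree := by omega
    rw [fdeg_eq, fdeg_eq, if_pos h1, if_pos h2]
  · simp [coeff_zero_of_lt h1, fdeg_eq, h1.ne']

private lemma totalDegree_mul_eq {n : ℕ} {p q : MvPolynomial (Fin n) ℤ}
    (hp : p ≠ 0) (hq : q ≠ 0) :
    (p * q).totalDegree = p.totalDegree + q.totalDegree := by
  refine le_antisymm (totalDegree_mul p q) ?_
  set P := homogeneousComponent p.totalDegree p with hP
  set Q := homogeneousComponent q.totalDegree q with hQ
  have hPQ : P * Q ≠ 0 := mul_ne_zero (hc_ne_zero hp) (hc_ne_zero hq)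
  obtain ⟨m0, hm0⟩ : ∃ m0, MvPolynomial.coeff m0 (P * Q) ≠ 0 := exists_coeff_ne_zero hPQ
  have hhom : MvPolynomial.IsHomogeneous (P * Q) (p.totalDegree + q.totalDegree) :=
    (homogeneousComponent_isHomogeneous _ p).mul (homogeneousComponent_isHomogeneous _ q)
  have hdeg : (∑ i, m0 i) = p.totalDegree + q.totalDegree := by
    have := hhom hm0
    rw [← fdeg_eq, Finsupp.degree_eq_weight_one]
    exact this
  have : MvPolynomial.coeff m0 (p * q) ≠ 0 := by
    rw [coeff_mul_top p q m0 hdeg]; exact hm0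
  have := le_totalDegree (mem_support_iff.mpr this)
  rw [sdeg_eq, hdeg] at this
  exact this

private lemma graphPoly_ne_zero {n : ℕ} (G : SimpleGraph (Fin n)) : graphPoly G ≠ 0 := by
  unfold graphPoly
  rw [Finset.prod_ne_zero_iff]
  intro p hp
  rw [Finset.mem_filter] at hp
  exact sub_ne_zero_of_ne (fun he => absurd (MvPolynomial.X_injective he) (ne_of_lt hp.2.1))

/-- If `f_G` divides `f_H`, then `α(f_G) ≤ α(f_H)` and hence `AT(G) ≤ AT(H)`. -/
theorem alpha_AT_of_dvd {n : ℕ} (G H : SimpleGraph (Fin n))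
    (h : graphPoly G ∣ graphPoly H) :
    alphaP (graphPoly G) ≤ alphaP (graphPoly H) ∧ AT G ≤ AT H := by
  have hmain : alphaP (graphPoly G) ≤ alphaP (graphPoly H) := by
    obtain ⟨r, hr⟩ := h
    have hG : graphPoly G ≠ 0 := graphPoly_ne_zero G
    have hH : graphPoly H ≠ 0 := graphPoly_ne_zero H
    have hrne : r ≠ 0 := by rintro rfl; rw [mul_zero] at hr; exact hH hr
    -- the defining set for alphaP (graphPoly H) is nonempty
    have hne : {k | ∃ m ∈ (graphPoly H).support,
        (∑ i, m i) = (graphPoly H).totalDegree ∧ ∀ i, m i ≤ k}.Nonempty := by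
      obtain ⟨m, hm, hs⟩ := exists_top_monomial hH
      exact ⟨∑ i, m i, m, hm, hs, fun i =>
        Finset.single_le_sum (fun j _ => Nat.zero_le (m j)) (Finset.mem_univ i)⟩
    obtain ⟨m, hm, hsum, hle⟩ := Nat.sInf_mem hne
    have htd : (graphPoly H).totalDegree = (graphPoly G).totalDegree + r.totalDegree := by
      rw [hr]; exact totalDegree_mul_eq hG hrne
    have hcm : MvPolynomial.coeff m (graphPoly H) ≠ 0 := mem_support_iff.mp hm
    rw [hr, coeff_mul_top _ _ _ (by rw [← htd, hsum]), coeff_mul] at hcm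
    obtain ⟨x, hx, hxne⟩ := Finset.exists_ne_zero_of_sum_ne_zero hcm
    rw [Finset.HasAntidiagonal.mem_antidiagonal] at hx
    have hx1 : MvPolynomial.coeff x.1 (homogeneousComponent (graphPoly G).totalDegree
        (graphPoly G)) ≠ 0 := left_ne_zero_of_mul hxne
    have hdeg1 : x.1.degree = (graphPoly G).totalDegree := by
      have := (homogeneousComponent_isHomogeneous (graphPoly G).totalDegree (graphPoly G)) hx1
      rw [Finsupp.degree_eq_weight_one]; exact this
    have hcoeff1 : MvPolynomial.coeff x.1 (graphPoly G) ≠ 0 := by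
      rw [coeff_homogeneousComponent, if_pos hdeg1] at hx1
      exact hx1
    apply Nat.sInf_le
    refine ⟨x.1, mem_support_iff.mpr hcoeff1, by rw [← fdeg_eq, hdeg1], fun i => ?_⟩
    calc x.1 i ≤ m i := by rw [← hx]; exact Nat.le_add_right _ _
      _ ≤ alphaP (graphPoly H) := hle i
  exact ⟨hmain, Nat.add_le_add_right hmain 1⟩
end

section
/- Let G be a graph with orientation O in which the maximum in-degree is k. If the number of even Eulerian subgraphs of O differs from the number of odd Eulerian subgraphs of O, then AT(G) − 1 ≤ k. -/
attribute [local instance] Classical.propDecidable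

/-- `dir` is an orientation of the graph `G`: every edge receives exactly one direction. -/
def IsOrientation {n : ℕ} (G : SimpleGraph (Fin n)) (dir : Fin n → Fin n → Prop) : Prop :=
  (∀ u v, dir u v → G.Adj u v) ∧ (∀ u v, G.Adj u v → (dir u v ↔ ¬ dir v u))

/-- The in-degree of a vertex in an orientation. -/
noncomputable def inDeg {n : ℕ} (dir : Fin n → Fin n → Prop) (v : Fin n) : ℕ :=
  (Finset.univ.filter fun u => dir u v).card

/-- An Eulerian subgraph of an orientation: a set of directed edges of the orientation in
which every vertex has in-degree equal to out-degree. -/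
def IsEulerianSub {n : ℕ} (dir : Fin n → Fin n → Prop) (A : Finset (Fin n × Fin n)) : Prop :=
  (∀ p ∈ A, dir p.1 p.2) ∧
  ∀ v, (A.filter fun p => p.2 = v).card = (A.filter fun p => p.1 = v).card

namespace ATAux
open Finset MvPolynomial

variable {n : ℕ}

noncomputable def E (G : SimpleGraph (Fin n)) : Finset (Fin n × Fin n) :=
  Finset.univ.filter (fun p : Fin n × Fin n => p.1 < p.2 ∧ G.Adj p.1 p.2)

noncomputable def hd (dir : Fin n → Fin n → Prop) (e : Fin n × Fin n) : Fin n :=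
  if dir e.1 e.2 then e.2 else e.1

noncomputable def tl (dir : Fin n → Fin n → Prop) (e : Fin n × Fin n) : Fin n :=
  if dir e.1 e.2 then e.1 else e.2

noncomputable def emb (dir : Fin n → Fin n → Prop) (e : Fin n × Fin n) : Fin n × Fin n :=
  (tl dir e, hd dir e)

noncomputable def pk (S : Finset (Fin n × Fin n)) (e : Fin n × Fin n) : Fin n :=
  if e ∈ S then e.1 else e.2

variable {G : SimpleGraph (Fin n)} {dir : Fin n → Fin n → Prop}

lemma mem_E {e : Fin n × Fin n} (he : e ∈ E G) : e.1 < e.2 ∧ G.Adj e.1 e.2 := by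
  simpa [E] using he

lemma dir_tl_hd (hor : IsOrientation G dir) {e : Fin n × Fin n} (he : e ∈ E G) : dir (tl dir e) (hd dir e) := by
  obtain ⟨-, hadj⟩ := mem_E he
  by_cases h : dir e.1 e.2
  · simpa [tl, hd, h]
  · have := (hor.2 e.2 e.1 hadj.symm).mpr (by simpa using h)
    simpa [tl, hd, h]

lemma tl_hd_cases {e : Fin n × Fin n} :
    (tl dir e = e.1 ∧ hd dir e = e.2) ∨ (tl dir e = e.2 ∧ hd dir e = e.1) := by
  unfold tl hd; split <;> simp

lemma tl_ne_hd {e : Fin n × Fin n} (he : e ∈ E G) : tl dir e ≠ hd dir e := by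
  have hlt := (mem_E he).1
  rcases tl_hd_cases (dir := dir) (e := e) with ⟨h1, h2⟩ | ⟨h1, h2⟩ <;> rw [h1, h2]
  · exact ne_of_lt hlt
  · exact ne_of_gt hlt


lemma not_dir_hd_tl (hor : IsOrientation G dir) {e : Fin n × Fin n} (he : e ∈ E G) :
    ¬ dir (hd dir e) (tl dir e) := by
  intro h
  have hadj := (mem_E he).2
  by_cases hp : dir e.1 e.2
  · exact ((hor.2 e.1 e.2 hadj).mp hp) (by simpa [hd, tl, hp] using h)
  · simp only [hd, tl, if_neg hp] at h; exact hp h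

lemma emb_injOn : Set.InjOn (emb dir) (E G) := by
  intro e he f hf h
  have h1 := (mem_E he).1; have h2 := (mem_E hf).1
  simp only [emb, Prod.ext_iff] at h
  obtain ⟨he1, he2⟩ | ⟨he1, he2⟩ := tl_hd_cases (dir := dir) (e := e) <;>
    obtain ⟨hf1, hf2⟩ | ⟨hf1, hf2⟩ := tl_hd_cases (dir := dir) (e := f) <;>
      rw [he1, he2, hf1, hf2] at h
  · exact Prod.ext_iff.mpr ⟨h.1, h.2⟩
  · rw [h.1, h.2] at h1; exact absurd h2 (lt_asymm h1)
  · rw [h.1, h.2] at h1; exact absurd h2 (lt_asymm h1)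
  · exact Prod.ext_iff.mpr ⟨h.2, h.1⟩

lemma exists_edge (hor : IsOrientation G dir) {p : Fin n × Fin n} (hp : dir p.1 p.2) :
    ∃ e ∈ E G, emb dir e = p := by
  have hadj := hor.1 _ _ hp
  have hne := hadj.ne
  rcases lt_or_gt_of_ne hne with h | h
  · exact ⟨p, by simp [E, h, hadj], by simp [emb, tl, hd, hp]⟩
  · refine ⟨(p.2, p.1), by simp [E, h, hadj.symm], ?_⟩
    have hnd : ¬ dir p.2 p.1 := (hor.2 _ _ hadj).mp hp ∘ fun h' => h'
    simp [emb, tl, hd, hnd]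

lemma A_eq_image (hor : IsOrientation G dir) {A : Finset (Fin n × Fin n)}
    (hA : ∀ p ∈ A, dir p.1 p.2) :
    ((E G).filter (fun e => emb dir e ∈ A)).image (emb dir) = A := by
  ext p
  simp only [mem_image, mem_filter]
  constructor
  · rintro ⟨e, ⟨-, h⟩, rfl⟩; exact h
  · intro hp
    obtain ⟨e, he, hemb⟩ := exists_edge hor (hA p hp)
    exact ⟨e, ⟨he, hemb ▸ hp⟩, hemb⟩

lemma card_filter_image {D : Finset (Fin n × Fin n)} (hD : D ⊆ E G)
    (p : Fin n × Fin n → Prop) :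
    ((D.image (emb dir)).filter p).card = (D.filter fun e => p (emb dir e)).card := by
  rw [Finset.filter_image]
  exact Finset.card_image_of_injOn
    ((emb_injOn (G := G)).mono (Finset.coe_subset.mpr ((filter_subset _ _).trans hD)))

lemma emb_mem_image {D : Finset (Fin n × Fin n)} (hD : D ⊆ E G) {e : Fin n × Fin n}
    (he : e ∈ E G) : emb dir e ∈ D.image (emb dir) ↔ e ∈ D := by
  constructor
  · intro h
    obtain ⟨f, hf, hfe⟩ := mem_image.mp h
    rwa [← emb_injOn (G := G) (hD hf) he hfe]
  · exact fun h => mem_image_of_mem _ h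


noncomputable def mexp (G : SimpleGraph (Fin n)) (S : Finset (Fin n × Fin n)) : Fin n →₀ ℕ :=
  (∑ e ∈ S, Finsupp.single e.1 1) + ∑ e ∈ E G \ S, Finsupp.single e.2 1

lemma mexp_eq {S : Finset (Fin n × Fin n)} (hS : S ⊆ E G) :
    mexp G S = ∑ e ∈ E G, Finsupp.single (pk S e) 1 := by
  have h1 : S ∪ (E G \ S) = E G := Finset.union_sdiff_of_subset hS
  rw [← h1, Finset.sum_union disjoint_sdiff, mexp]
  congr 1
  · exact Finset.sum_congr rfl fun e he => by rw [pk, if_pos he]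
  · exact Finset.sum_congr rfl fun e he => by rw [pk, if_neg (mem_sdiff.mp he).2]

lemma mexp_apply {S : Finset (Fin n × Fin n)} (hS : S ⊆ E G) (v : Fin n) :
    mexp G S v = ((E G).filter fun e => pk S e = v).card := by
  rw [mexp_eq hS, Finset.card_filter, Finsupp.finset_sum_apply]
  exact Finset.sum_congr rfl fun e _ => Finsupp.single_apply

lemma inDeg_eq (hor : IsOrientation G dir) (v : Fin n) :
    (Finset.univ.filter fun u => dir u v).card
      = ((E G).filter fun e => hd dir e = v).card := by
  refine Finset.card_bij' (fun u _ => if u < v then (u, v) else (v, u))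
    (fun e _ => tl dir e) ?_ ?_ ?_ ?_
  · intro u hu
    have hd' : dir u v := by simpa using hu
    have hadj := hor.1 _ _ hd'
    have hne : u ≠ v := hadj.ne
    have hnd : ¬ dir v u := (hor.2 _ _ hadj).mp hd'
    rcases lt_or_gt_of_ne hne with h | h
    · refine Finset.mem_filter.mpr ⟨Finset.mem_filter.mpr ⟨Finset.mem_univ _, ?_⟩, ?_⟩ <;> simp [h, hadj, hd, hd']
    · have hnlt : ¬ u < v := asymm h
      refine Finset.mem_filter.mpr ⟨Finset.mem_filter.mpr ⟨Finset.mem_univ _, ?_⟩, ?_⟩ <;> simp [h, hnlt, hadj.symm, hd, hnd]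
  · intro e he
    have h1 := mem_filter.mp he
    have := dir_tl_hd hor h1.1
    rw [h1.2] at this
    simpa using this
  · intro u hu
    have hd' : dir u v := by simpa using hu
    have hnd : ¬ dir v u := (hor.2 _ _ (hor.1 _ _ hd')).mp hd'
    by_cases h : u < v <;> simp [h, tl, hd', hnd]
  · intro e he
    have h1 := mem_filter.mp he
    have hlt := (mem_E h1.1).1
    have hdt := dir_tl_hd hor h1.1
    show (if tl dir e < v then (tl dir e, v) else (v, tl dir e)) = e
    rcases tl_hd_cases (dir := dir) (e := e) with ⟨ht, hh⟩ | ⟨ht, hh⟩ <;>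
      rw [ht, ← h1.2, hh]
    · rw [if_pos hlt]
    · rw [if_neg (not_lt.mpr hlt.le)]


lemma prod_X_eq_monomial {β : Type*} (s : Finset β) (t : β → Fin n) :
    (∏ e ∈ s, (X (t e) : MvPolynomial (Fin n) ℤ))
      = monomial (∑ e ∈ s, Finsupp.single (t e) 1) 1 := by
  induction s using Finset.cons_induction with
  | empty => simp
  | cons a s ha ih =>
    rw [prod_cons, sum_cons, ih, X, monomial_mul, one_mul]

lemma expand (G : SimpleGraph (Fin n)) :
    (∏ p ∈ E G, (X p.1 - X p.2 : MvPolynomial (Fin n) ℤ))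
      = ∑ S ∈ (E G).powerset, monomial (mexp G S) ((-1) ^ (E G \ S).card) := by
  rw [Finset.prod_congr rfl (fun p _ => sub_eq_add_neg (X p.1 : MvPolynomial (Fin n) ℤ) (X p.2)),
    Finset.prod_add]
  refine Finset.sum_congr rfl fun S hS => ?_
  have h2 : ∏ e ∈ E G \ S, (-X e.2 : MvPolynomial (Fin n) ℤ)
      = (-1) ^ (E G \ S).card * ∏ e ∈ E G \ S, X e.2 := by
    rw [← Finset.prod_const, ← Finset.prod_mul_distrib]
    exact Finset.prod_congr rfl fun e _ => (neg_one_mul _).symm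
  rw [h2, prod_X_eq_monomial, prod_X_eq_monomial, mul_left_comm, monomial_mul, mul_one]
  have h3 : ((-1 : MvPolynomial (Fin n) ℤ)) ^ (E G \ S).card
      = C ((-1 : ℤ) ^ (E G \ S).card) := by rw [map_pow, map_neg, map_one]
  rw [h3, C_mul_monomial, mul_one, mexp]

lemma coeff_expand (G : SimpleGraph (Fin n)) (μ : Fin n →₀ ℕ) :
    coeff μ (∏ p ∈ E G, (X p.1 - X p.2 : MvPolynomial (Fin n) ℤ))
      = ∑ S ∈ (E G).powerset.filter (fun S => mexp G S = μ), (-1 : ℤ) ^ (E G \ S).card := by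
  rw [expand, coeff_sum, Finset.sum_filter]
  exact Finset.sum_congr rfl fun S _ => coeff_monomial μ (mexp G S) _

noncomputable def AS (G : SimpleGraph (Fin n)) (dir : Fin n → Fin n → Prop)
    (S : Finset (Fin n × Fin n)) : Finset (Fin n × Fin n) :=
  ((E G).filter fun e => pk S e ≠ hd dir e).image (emb dir)

noncomputable def pk' (dir : Fin n → Fin n → Prop) (A : Finset (Fin n × Fin n))
    (e : Fin n × Fin n) : Fin n :=
  if emb dir e ∈ A then tl dir e else hd dir e

noncomputable def S' (G : SimpleGraph (Fin n)) (dir : Fin n → Fin n → Prop)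
    (A : Finset (Fin n × Fin n)) : Finset (Fin n × Fin n) :=
  (E G).filter fun e => pk' dir A e = e.1

noncomputable def mu0 (dir : Fin n → Fin n → Prop) : Fin n →₀ ℕ :=
  Finsupp.equivFunOnFinite.symm fun v => inDeg dir v

lemma pk_tl_or_hd (S : Finset (Fin n × Fin n)) (e : Fin n × Fin n) :
    pk S e = tl dir e ∨ pk S e = hd dir e := by
  unfold pk
  rcases tl_hd_cases (dir := dir) (e := e) with ⟨h1, h2⟩ | ⟨h1, h2⟩ <;> split
  · exact Or.inl h1.symm
  · exact Or.inr h2.symm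
  · exact Or.inr h2.symm
  · exact Or.inl h1.symm

lemma pk'_cases (A : Finset (Fin n × Fin n)) (e : Fin n × Fin n) :
    pk' dir A e = e.1 ∨ pk' dir A e = e.2 := by
  unfold pk'
  rcases tl_hd_cases (dir := dir) (e := e) with ⟨h1, h2⟩ | ⟨h1, h2⟩ <;> split
  · exact Or.inl h1
  · exact Or.inr h2
  · exact Or.inr h1
  · exact Or.inl h2

lemma card_split {X : Type*} [DecidableEq X] {s D : Finset X} (hD : D ⊆ s)
    (q : X → Prop) [DecidablePred q] :
    (s.filter q).card = (D.filter q).card + ((s \ D).filter q).card := by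
  rw [← Finset.card_union_of_disjoint (Finset.disjoint_filter_filter disjoint_sdiff),
    ← Finset.filter_union, Finset.union_sdiff_of_subset hD]

lemma card_image_snd {D : Finset (Fin n × Fin n)} (hD : D ⊆ E G) (v : Fin n) :
    ((D.image (emb dir)).filter fun p => p.2 = v).card
      = (D.filter fun e => hd dir e = v).card := by
  rw [Finset.filter_image, Finset.card_image_of_injOn
    ((emb_injOn (G := G)).mono (Finset.coe_subset.mpr ((filter_subset _ _).trans hD)))]
  congr 1

lemma card_image_fst {D : Finset (Fin n × Fin n)} (hD : D ⊆ E G) (v : Fin n) :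
    ((D.image (emb dir)).filter fun p => p.1 = v).card
      = (D.filter fun e => tl dir e = v).card := by
  rw [Finset.filter_image, Finset.card_image_of_injOn
    ((emb_injOn (G := G)).mono (Finset.coe_subset.mpr ((filter_subset _ _).trans hD)))]
  congr 1

lemma mem_S' {A : Finset (Fin n × Fin n)} {e : Fin n × Fin n} :
    e ∈ S' G dir A ↔ e ∈ E G ∧ pk' dir A e = e.1 := by
  unfold S'; exact mem_filter

lemma count_split (c : Fin n × Fin n → Prop) [DecidablePred c] (f : Fin n × Fin n → Fin n)
    (h1 : ∀ e ∈ E G, c e → f e = tl dir e) (h2 : ∀ e ∈ E G, ¬ c e → f e = hd dir e)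
    (v : Fin n) :
    ((E G).filter fun e => f e = v).card
      = (((E G).filter c).filter fun e => tl dir e = v).card
        + ((E G \ (E G).filter c).filter fun e => hd dir e = v).card := by
  rw [card_split (filter_subset c (E G)) (fun e => f e = v)]
  have e1 : ((E G).filter c).filter (fun e => f e = v)
      = ((E G).filter c).filter (fun e => tl dir e = v) := by
    refine filter_congr fun e he => ?_
    obtain ⟨heE, hce⟩ := mem_filter.mp he
    rw [h1 e heE hce]
  have e2 : (E G \ (E G).filter c).filter (fun e => f e = v)
      = (E G \ (E G).filter c).filter (fun e => hd dir e = v) := by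
    refine filter_congr fun e he => ?_
    obtain ⟨heE, hne⟩ := mem_sdiff.mp he
    have hc : ¬ c e := fun hc => hne (mem_filter.mpr ⟨heE, hc⟩)
    rw [h2 e heE hc]
  rw [e1, e2]

lemma inDeg_eq' (hor : IsOrientation G dir) (v : Fin n) :
    inDeg dir v = ((E G).filter fun e => hd dir e = v).card :=
  inDeg_eq hor v

lemma mu0_apply (v : Fin n) : mu0 dir v = inDeg dir v := by
  simp [mu0]

lemma AS_eulerian (hor : IsOrientation G dir) {S : Finset (Fin n × Fin n)}
    (hS : S ⊆ E G) (hm : mexp G S = mu0 dir) :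
    IsEulerianSub dir (AS G dir S) := by
  constructor
  · intro p hp
    obtain ⟨e, he, rfl⟩ := mem_image.mp hp
    exact dir_tl_hd hor (mem_filter.mp he).1
  · intro v
    have hDsub : ((E G).filter fun e => pk S e ≠ hd dir e) ⊆ E G := filter_subset _ _
    show (((((E G).filter fun e => pk S e ≠ hd dir e)).image (emb dir)).filter
        fun p => p.2 = v).card
      = (((((E G).filter fun e => pk S e ≠ hd dir e)).image (emb dir)).filter
        fun p => p.1 = v).card
    rw [card_image_snd hDsub v, card_image_fst hDsub v]
    have h1 := count_split (G := G) (fun e => pk S e ≠ hd dir e) (pk S)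
      (fun e _ hc => (pk_tl_or_hd S e).resolve_right hc)
      (fun e _ hc => not_not.mp hc) v
    have h2 := card_split (filter_subset (fun e => pk S e ≠ hd dir e) (E G))
      (fun e => hd dir e = v)
    have h3 : ((E G).filter fun e => pk S e = v).card
        = ((E G).filter fun e => hd dir e = v).card := by
      rw [← mexp_apply hS v, hm, mu0_apply, inDeg_eq' hor]
    omega

lemma pk_S'_eq {A : Finset (Fin n × Fin n)} {e : Fin n × Fin n} (he : e ∈ E G) :
    pk (S' G dir A) e = pk' dir A e := by
  by_cases h : pk' dir A e = e.1
  · rw [pk, if_pos (mem_S'.mpr ⟨he, h⟩), h]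
  · have h2 : pk' dir A e = e.2 := (pk'_cases A e).resolve_left h
    rw [pk, if_neg (fun hm => h (mem_S'.mp hm).2), h2]

lemma S'_mem (hor : IsOrientation G dir) {A : Finset (Fin n × Fin n)}
    (hA : IsEulerianSub dir A) :
    S' G dir A ⊆ E G ∧ mexp G (S' G dir A) = mu0 dir := by
  have hsub : S' G dir A ⊆ E G := filter_subset _ _
  refine ⟨hsub, ?_⟩
  ext v
  have m1 : mexp G (S' G dir A) v
      = ((E G).filter fun e => pk (S' G dir A) e = v).card := mexp_apply hsub v
  have m2 : ((E G).filter fun e => pk (S' G dir A) e = v).card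
      = ((E G).filter fun e => pk' dir A e = v).card := by
    congr 1
    exact filter_congr fun e he => by rw [pk_S'_eq he]
  have m3 := count_split (G := G) (c := fun e => emb dir e ∈ A) (f := pk' dir A)
    (fun e _ hc => by rw [pk', if_pos hc]) (fun e _ hc => by rw [pk', if_neg hc]) v
  have m5 := card_image_snd (G := G) (dir := dir) (filter_subset (fun e => emb dir e ∈ A) (E G)) v
  have m6 := card_image_fst (G := G) (dir := dir) (filter_subset (fun e => emb dir e ∈ A) (E G)) v
  rw [A_eq_image hor hA.1] at m5 m6
  have m7 := hA.2 v
  have m8 := card_split (filter_subset (fun e => emb dir e ∈ A) (E G))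
    (fun e => hd dir e = v)
  have m9 : inDeg dir v = ((E G).filter fun e => hd dir e = v).card := inDeg_eq' hor v
  have m10 : (mu0 dir) v = inDeg dir v := mu0_apply v
  omega

lemma left_inv_lem (hor : IsOrientation G dir) {S : Finset (Fin n × Fin n)}
    (hS : S ⊆ E G) : S' G dir (AS G dir S) = S := by
  ext e
  by_cases he : e ∈ E G
  · have hmem : emb dir e ∈ AS G dir S ↔ e ∈ (E G).filter (fun f => pk S f ≠ hd dir f) :=
      emb_mem_image (filter_subset _ _) he
    have hpk' : pk' dir (AS G dir S) e = pk S e := by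
      unfold pk'
      by_cases hD : e ∈ (E G).filter (fun f => pk S f ≠ hd dir f)
      · rw [if_pos (hmem.mpr hD)]
        exact ((pk_tl_or_hd S e).resolve_right (mem_filter.mp hD).2).symm
      · rw [if_neg (fun h => hD (hmem.mp h))]
        have h2 : ¬ (pk S e ≠ hd dir e) := fun h => hD (mem_filter.mpr ⟨he, h⟩)
        exact (not_not.mp h2).symm
    simp only [S', mem_filter, hpk', he, true_and]
    constructor
    · intro h
      by_contra hS'
      have h2 : pk S e = e.2 := by rw [pk, if_neg hS']
      rw [h2] at h
      exact absurd h (ne_of_gt (mem_E he).1)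
    · intro h; rw [pk, if_pos h]
  · constructor
    · intro h; exact absurd ((filter_subset _ _) h) he
    · intro h; exact absurd (hS h) he

lemma right_inv_lem (hor : IsOrientation G dir) {A : Finset (Fin n × Fin n)}
    (hA : IsEulerianSub dir A) : AS G dir (S' G dir A) = A := by
  have h1 : (E G).filter (fun e => pk (S' G dir A) e ≠ hd dir e)
      = (E G).filter (fun e => emb dir e ∈ A) := by
    refine filter_congr fun e he => ?_
    rw [pk_S'_eq (A := A) he]
    unfold pk'
    by_cases hm : emb dir e ∈ A
    · simp [hm, tl_ne_hd he]
    · simp [hm]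
  show ((E G).filter fun e => pk (S' G dir A) e ≠ hd dir e).image (emb dir) = A
  rw [h1]
  exact A_eq_image hor hA.1

lemma sign_eq {S : Finset (Fin n × Fin n)} (hS : S ⊆ E G) :
    (-1 : ℤ) ^ (E G \ S).card
      = (-1) ^ ((E G).filter fun e => dir e.1 e.2).card * (-1) ^ (AS G dir S).card := by
  have hAcard : (AS G dir S).card = ((E G).filter fun e => pk S e ≠ hd dir e).card :=
    Finset.card_image_of_injOn
      ((emb_injOn (G := G)).mono (Finset.coe_subset.mpr (filter_subset _ _)))
  have hD1 : (S.filter fun e => pk S e ≠ hd dir e) = S.filter fun e => dir e.1 e.2 := by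
    refine filter_congr fun e he => ?_
    have hpk : pk S e = e.1 := by rw [pk, if_pos he]
    have hne := ne_of_lt (mem_E (hS he)).1
    rw [hpk]
    unfold hd
    constructor
    · intro h
      by_contra hp
      rw [if_neg hp] at h
      exact h rfl
    · intro hp
      rw [if_pos hp]
      exact hne
  have hD2 : ((E G \ S).filter fun e => pk S e ≠ hd dir e)
      = (E G \ S).filter fun e => ¬ dir e.1 e.2 := by
    refine filter_congr fun e he => ?_
    obtain ⟨heE, heS⟩ := mem_sdiff.mp he
    have hpk : pk S e = e.2 := by rw [pk, if_neg heS]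
    have hne := ne_of_gt (mem_E heE).1
    rw [hpk]
    unfold hd
    constructor
    · intro h hp
      rw [if_pos hp] at h
      exact h rfl
    · intro hp
      rw [if_neg hp]
      exact hne
  have key : ((E G).filter fun e => pk S e ≠ hd dir e).card
        + ((E G).filter fun e => dir e.1 e.2).card
      = (E G \ S).card + 2 * (S.filter fun e => dir e.1 e.2).card := by
    have a1 := card_split hS (fun e => pk S e ≠ hd dir e)
    have a2 := card_split hS (fun e => dir e.1 e.2)
    have a3 := card_filter_add_card_filter_not (s := E G \ S)
      (fun e => dir e.1 e.2)
    have b1 := congrArg Finset.card hD1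
    have b2 := congrArg Finset.card hD2
    omega
  have hpow := congrArg (fun m => (-1 : ℤ) ^ m) key
  simp only [pow_add, pow_mul, neg_one_sq, one_pow, mul_one] at hpow
  rw [hAcard, mul_comm]
  exact hpow.symm

lemma key_bij (hor : IsOrientation G dir) :
    ∑ S ∈ (E G).powerset.filter (fun S => mexp G S = mu0 dir), (-1 : ℤ) ^ (E G \ S).card
      = (-1) ^ ((E G).filter fun e => dir e.1 e.2).card
        * ∑ A ∈ univ.filter (fun A : Finset (Fin n × Fin n) => IsEulerianSub dir A),
            (-1 : ℤ) ^ A.card := by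
  rw [Finset.mul_sum]
  refine Finset.sum_nbij' (fun S => AS G dir S) (fun A => S' G dir A) ?_ ?_ ?_ ?_ ?_
  · intro S hS
    obtain ⟨hS1, hS2⟩ := mem_filter.mp hS
    exact mem_filter.mpr ⟨mem_univ _, AS_eulerian hor (mem_powerset.mp hS1) hS2⟩
  · intro A hA
    obtain ⟨h1, h2⟩ := S'_mem hor (mem_filter.mp hA).2
    exact mem_filter.mpr ⟨mem_powerset.mpr h1, h2⟩
  · intro S hS
    exact left_inv_lem hor (mem_powerset.mp (mem_filter.mp hS).1)
  · intro A hA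
    exact right_inv_lem hor (mem_filter.mp hA).2
  · intro S hS
    exact sign_eq (mem_powerset.mp (mem_filter.mp hS).1)

lemma parity_sum (s : Finset (Finset (Fin n × Fin n))) :
    ∑ A ∈ s, (-1 : ℤ) ^ A.card
      = ((s.filter fun A => Even A.card).card : ℤ)
        - ((s.filter fun A => Odd A.card).card : ℤ) := by
  rw [← Finset.sum_filter_add_sum_filter_not s (fun A => Even A.card)]
  have h1 : ∑ A ∈ s.filter (fun A => Even A.card), (-1 : ℤ) ^ A.card
      = ((s.filter fun A => Even A.card).card : ℤ) := by
    rw [Finset.sum_congr rfl (fun A hA => Even.neg_one_pow (mem_filter.mp hA).2)]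
    simp
  have h2 : ∑ A ∈ s.filter (fun A => ¬ Even A.card), (-1 : ℤ) ^ A.card
      = -((s.filter fun A => Odd A.card).card : ℤ) := by
    have he : s.filter (fun A => ¬ Even A.card) = s.filter (fun A => Odd A.card) :=
      filter_congr fun A _ => Nat.not_even_iff_odd
    rw [he, Finset.sum_congr rfl (fun A hA => Odd.neg_one_pow (mem_filter.mp hA).2)]
    simp
  rw [h1, h2]
  ring

lemma sum_mu0 (hor : IsOrientation G dir) : ∑ v, mu0 dir v = (E G).card := by
  simp only [mu0_apply]
  rw [Finset.card_eq_sum_card_fiberwise (f := hd dir) (t := univ) (fun e _ => mem_univ _)]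
  exact Finset.sum_congr rfl fun v _ => inDeg_eq' hor v

lemma totalDegree_le (G : SimpleGraph (Fin n)) :
    (∏ p ∈ E G, (X p.1 - X p.2 : MvPolynomial (Fin n) ℤ)).totalDegree ≤ (E G).card := by
  refine (totalDegree_finset_prod _ _).trans ?_
  have h : ∀ p ∈ E G, (X p.1 - X p.2 : MvPolynomial (Fin n) ℤ).totalDegree ≤ 1 := by
    intro p _
    refine (totalDegree_sub _ _).trans ?_
    simp [totalDegree_X]
  calc ∑ p ∈ E G, (X p.1 - X p.2 : MvPolynomial (Fin n) ℤ).totalDegree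
      ≤ ∑ _p ∈ E G, 1 := Finset.sum_le_sum h
    _ = (E G).card := by simp

end ATAux

/-- Alon–Tarsi: if in an orientation with maximum in-degree `k` the numbers of even and odd
Eulerian subgraphs differ, then `AT(G) - 1 ≤ k`. -/
theorem AT_le_of_eulerian_counts {n : ℕ} (G : SimpleGraph (Fin n))
    (dir : Fin n → Fin n → Prop) (k : ℕ)
    (hor : IsOrientation G dir) (hk : ∀ v, inDeg dir v ≤ k)
    (hne : (Finset.univ.filter fun A : Finset (Fin n × Fin n) =>
              IsEulerianSub dir A ∧ Even A.card).card ≠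
           (Finset.univ.filter fun A : Finset (Fin n × Fin n) =>
              IsEulerianSub dir A ∧ Odd A.card).card) :
    AT G - 1 ≤ k := by
  have hg : graphPoly G
      = ∏ p ∈ ATAux.E G, (MvPolynomial.X p.1 - MvPolynomial.X p.2) := rfl
  have hcoeff : MvPolynomial.coeff (ATAux.mu0 dir) (graphPoly G)
      = (-1) ^ ((ATAux.E G).filter fun e => dir e.1 e.2).card
        * (((Finset.univ.filter fun A : Finset (Fin n × Fin n) =>
              IsEulerianSub dir A ∧ Even A.card).card : ℤ)
          - ((Finset.univ.filter fun A : Finset (Fin n × Fin n) =>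
              IsEulerianSub dir A ∧ Odd A.card).card : ℤ)) := by
    rw [hg, ATAux.coeff_expand, ATAux.key_bij hor, ATAux.parity_sum,
      Finset.filter_filter, Finset.filter_filter]
  have hne' : MvPolynomial.coeff (ATAux.mu0 dir) (graphPoly G) ≠ 0 := by
    rw [hcoeff]
    refine mul_ne_zero (pow_ne_zero _ (by norm_num)) ?_
    refine sub_ne_zero.mpr ?_
    exact_mod_cast hne
  have hsupp : ATAux.mu0 dir ∈ (graphPoly G).support :=
    MvPolynomial.mem_support_iff.mpr hne'
  have hsum : ∑ v, ATAux.mu0 dir v = (ATAux.E G).card := ATAux.sum_mu0 hor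
  have htot : (graphPoly G).totalDegree = (ATAux.E G).card := by
    refine le_antisymm (hg ▸ ATAux.totalDegree_le G) ?_
    have h2 : (ATAux.mu0 dir).sum (fun _ e => e) = ∑ v, ATAux.mu0 dir v :=
      Finsupp.sum_fintype _ _ (fun _ => rfl)
    have h3 := MvPolynomial.le_totalDegree hsupp
    rw [h2, hsum] at h3
    exact h3
  have halpha : alphaP (graphPoly G) ≤ k := by
    apply Nat.sInf_le
    refine ⟨ATAux.mu0 dir, hsupp, ?_, ?_⟩
    · rw [htot]; exact hsum
    · intro i
      rw [ATAux.mu0_apply]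
      exact hk i
  simpa [AT] using halpha
end

section
/- For an augmented orientation (G, D, O), the augmented graph polynomial satisfies W_{G,D} = f_G · P for some nonzero polynomial P; consequently α(f_G) ≤ α(W_{G,D}). -/
attribute [local instance] Classical.propDecidable

/-- The augmented graph polynomial `W_{G,D} = ∏_{i<j, e={v_i,v_j}∈E} (x_i^{D(e)} - x_j^{D(e)})`. -/
noncomputable def augPoly {n : ℕ} (G : SimpleGraph (Fin n)) (D : Sym2 (Fin n) → ℕ) :
    MvPolynomial (Fin n) ℤ :=
  ∏ p ∈ Finset.univ.filter (fun p : Fin n × Fin n => p.1 < p.2 ∧ G.Adj p.1 p.2),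
    (MvPolynomial.X p.1 ^ D s(p.1, p.2) - MvPolynomial.X p.2 ^ D s(p.1, p.2))

private lemma sum_eq_of_mem_support {n : ℕ} {P : MvPolynomial (Fin n) ℤ} {c : ℕ}
    (hP : P.IsHomogeneous c) {m : Fin n →₀ ℕ} (hm : m ∈ P.support) : (∑ i, m i) = c := by
  have h := hP (MvPolynomial.mem_support_iff.mp hm)
  rw [← h]
  simp [Finsupp.weight_apply, Finsupp.sum_fintype]

private lemma alphaP_le_of_mul {n : ℕ} {Q R : MvPolynomial (Fin n) ℤ} {a b : ℕ}
    (hQ : Q.IsHomogeneous a) (hR : R.IsHomogeneous b) (hQ0 : Q ≠ 0) (hR0 : R ≠ 0) :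
    alphaP Q ≤ alphaP (Q * R) := by
  classical
  have hQR0 : Q * R ≠ 0 := mul_ne_zero hQ0 hR0
  have hQR : (Q * R).IsHomogeneous (a + b) := hQ.mul hR
  have hne : {k | ∃ m ∈ (Q * R).support,
      (∑ i, m i) = (Q * R).totalDegree ∧ ∀ i, m i ≤ k}.Nonempty := by
    obtain ⟨m, hm⟩ := MvPolynomial.support_nonempty.mpr hQR0
    exact ⟨∑ i, m i, m, hm,
      by rw [sum_eq_of_mem_support hQR hm, hQR.totalDegree hQR0],
      fun i => Finset.single_le_sum (fun _ _ => Nat.zero_le _) (Finset.mem_univ i)⟩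
  rw [alphaP, alphaP]
  obtain ⟨m, hm, hmd, hmk⟩ := Nat.sInf_mem hne
  obtain ⟨u, hu, v, hv, huv⟩ := Finset.mem_add.mp (MvPolynomial.support_mul Q R hm)
  refine Nat.sInf_le ⟨u, hu, ?_, fun i => ?_⟩
  · rw [sum_eq_of_mem_support hQ hu, hQ.totalDegree hQ0]
  · calc u i ≤ u i + v i := Nat.le_add_right _ _
      _ = m i := by rw [← huv]; simp
      _ ≤ _ := hmk i

/-- `W_{G,D} = f_G · P` for some nonzero polynomial `P`; consequently
`α(f_G) ≤ α(W_{G,D})`. -/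
theorem augPoly_eq_graphPoly_mul {n : ℕ} (G : SimpleGraph (Fin n)) (D : Sym2 (Fin n) → ℕ)
    (hD : ∀ e ∈ G.edgeSet, 0 < D e) :
    (∃ P : MvPolynomial (Fin n) ℤ, P ≠ 0 ∧ augPoly G D = graphPoly G * P) ∧
    alphaP (graphPoly G) ≤ alphaP (augPoly G D) := by
  classical
  set E := Finset.univ.filter (fun p : Fin n × Fin n => p.1 < p.2 ∧ G.Adj p.1 p.2) with hE
  have hedge : ∀ p ∈ E, 0 < D s(p.1, p.2) ∧ p.1 ≠ p.2 := by
    intro p hp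
    simp only [hE, Finset.mem_filter] at hp
    exact ⟨hD _ (G.mem_edgeSet.mpr hp.2.2), hp.2.2.ne⟩
  set P : MvPolynomial (Fin n) ℤ :=
    ∏ p ∈ E, ∑ i ∈ Finset.range (D s(p.1, p.2)),
      MvPolynomial.X p.1 ^ i * MvPolynomial.X p.2 ^ (D s(p.1, p.2) - 1 - i) with hP
  have hfactor : augPoly G D = graphPoly G * P := by
    rw [augPoly, graphPoly, hP, ← hE, ← Finset.prod_mul_distrib]
    refine Finset.prod_congr rfl fun p hp => ?_
    rw [mul_comm, geom_sum₂_mul]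
  have haug0 : augPoly G D ≠ 0 := by
    rw [augPoly, ← hE]
    rw [Finset.prod_ne_zero_iff]
    intro p hp h0
    obtain ⟨hd, hne⟩ := hedge p hp
    have := congrArg (MvPolynomial.coeff (Finsupp.single p.1 (D s(p.1, p.2)))) h0
    have hneq : (Finsupp.single p.2 (D s(p.1, p.2))) ≠ Finsupp.single p.1 (D s(p.1, p.2)) := by
      intro h
      rcases (Finsupp.single_eq_single_iff _ _ _ _).mp h with ⟨h1, _⟩ | ⟨h1, _⟩
      · exact hne h1.symm
      · omega
    simp [MvPolynomial.coeff_X_pow, hneq] at this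
  have hP0 : P ≠ 0 := by
    intro h
    rw [h, mul_zero] at hfactor
    exact haug0 hfactor
  have hg0 : graphPoly G ≠ 0 := by
    intro h
    rw [h, zero_mul] at hfactor
    exact haug0 hfactor
  have hgh : (graphPoly G).IsHomogeneous (∑ _p ∈ E, 1) := by
    rw [graphPoly, ← hE]
    exact MvPolynomial.IsHomogeneous.prod E _ _ fun p _ =>
      (MvPolynomial.isHomogeneous_X _ _).sub (MvPolynomial.isHomogeneous_X _ _)
  have hPh : P.IsHomogeneous (∑ p ∈ E, (D s(p.1, p.2) - 1)) := by
    rw [hP]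
    refine MvPolynomial.IsHomogeneous.prod E _ _ fun p hp => ?_
    refine MvPolynomial.IsHomogeneous.sum _ _ _ fun i hi => ?_
    have h := ((MvPolynomial.isHomogeneous_X ℤ p.1).pow i).mul
      ((MvPolynomial.isHomogeneous_X ℤ p.2).pow (D s(p.1, p.2) - 1 - i))
    have hi' : i < D s(p.1, p.2) := Finset.mem_range.mp hi
    convert h using 1
    omega
  refine ⟨⟨P, hP0, hfactor⟩, ?_⟩
  rw [hfactor]
  exact alphaP_le_of_mul hgh hPh hg0 hP0
end

section
/- Let (G,D,O) be an augmented orientation with maximum augmented in-degree k. If the number of even Eulerian structures in (G,D,O) differs from the number of odd Eulerian structures, then AT(G) − 1 ≤ α(W_{G,D}) ≤ k. -/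
attribute [local instance] Classical.propDecidable

/-- The augmented in-degree of `v` in a set `A` of directed edges with strengths `D`. -/
noncomputable def augIn {n : ℕ} (D : Sym2 (Fin n) → ℕ) (A : Finset (Fin n × Fin n))
    (v : Fin n) : ℕ :=
  ∑ p ∈ A.filter (fun p => p.2 = v), D s(p.1, p.2)

/-- The augmented out-degree of `v` in a set `A` of directed edges with strengths `D`. -/
noncomputable def augOut {n : ℕ} (D : Sym2 (Fin n) → ℕ) (A : Finset (Fin n × Fin n))
    (v : Fin n) : ℕ :=
  ∑ p ∈ A.filter (fun p => p.1 = v), D s(p.1, p.2)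

/-- An Eulerian structure: a set of directed edges of the augmented orientation `(dir, D)`
in which every vertex has augmented in-degree equal to augmented out-degree. -/
def IsEulerianStructure {n : ℕ} (dir : Fin n → Fin n → Prop) (D : Sym2 (Fin n) → ℕ)
    (A : Finset (Fin n × Fin n)) : Prop :=
  (∀ p ∈ A, dir p.1 p.2) ∧ ∀ v, augIn D A v = augOut D A v

/-! ### Auxiliary material -/

open Finset MvPolynomial

namespace ATwork

variable {n : ℕ}

/-- The edges of `G` as sorted pairs. -/
noncomputable def ES (G : SimpleGraph (Fin n)) : Finset (Fin n × Fin n) :=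
  Finset.univ.filter (fun p : Fin n × Fin n => p.1 < p.2 ∧ G.Adj p.1 p.2)

lemma mem_ES {G : SimpleGraph (Fin n)} {p : Fin n × Fin n} :
    p ∈ ES G ↔ p.1 < p.2 ∧ G.Adj p.1 p.2 := by simp [ES]

/-- The head of an edge under the orientation `dir`. -/
noncomputable def hd (dir : Fin n → Fin n → Prop) (p : Fin n × Fin n) : Fin n :=
  if dir p.1 p.2 then p.2 else p.1

/-- The tail of an edge under the orientation `dir`. -/
noncomputable def tl (dir : Fin n → Fin n → Prop) (p : Fin n × Fin n) : Fin n :=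
  if dir p.1 p.2 then p.1 else p.2

/-- The directed version of an edge. -/
noncomputable def orient (dir : Fin n → Fin n → Prop) (p : Fin n × Fin n) : Fin n × Fin n :=
  (tl dir p, hd dir p)

/-- The exponent vector obtained by choosing, for each edge, the second endpoint when the
edge lies in `t` and the first endpoint otherwise. -/
noncomputable def mSet (G : SimpleGraph (Fin n)) (D : Sym2 (Fin n) → ℕ)
    (t : Finset (Fin n × Fin n)) : Fin n →₀ ℕ :=
  ∑ p ∈ ES G, Finsupp.single (if p ∈ t then p.2 else p.1) (D s(p.1, p.2))

/-- The augmented in-degree vector of the orientation `dir`. -/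
noncomputable def mStar (G : SimpleGraph (Fin n)) (dir : Fin n → Fin n → Prop)
    (D : Sym2 (Fin n) → ℕ) : Fin n →₀ ℕ :=
  ∑ p ∈ ES G, Finsupp.single (hd dir p) (D s(p.1, p.2))

lemma prod_X_pow (s : Finset (Fin n × Fin n)) (φ : Fin n × Fin n → Fin n)
    (e : Fin n × Fin n → ℕ) :
    ∏ p ∈ s, (X (φ p) ^ e p : MvPolynomial (Fin n) ℤ)
      = monomial (∑ p ∈ s, Finsupp.single (φ p) (e p)) 1 := by
  induction s using Finset.cons_induction with
  | empty => simp
  | cons a s ha ih =>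
      rw [prod_cons, sum_cons, ih, X_pow_eq_monomial, monomial_mul, one_mul]

lemma augPoly_expand (G : SimpleGraph (Fin n)) (D : Sym2 (Fin n) → ℕ) :
    augPoly G D = ∑ t ∈ (ES G).powerset, monomial (mSet G D t) ((-1 : ℤ) ^ t.card) := by
  have h1 : augPoly G D
      = ∏ p ∈ ES G, ((-(X p.2 ^ D s(p.1, p.2))) + X p.1 ^ D s(p.1, p.2)) := by
    refine Finset.prod_congr rfl fun p _ => ?_
    rw [neg_add_eq_sub]
  rw [h1, Finset.prod_add]
  refine Finset.sum_congr rfl fun t ht => ?_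
  rw [Finset.mem_powerset] at ht
  have h2 : ∏ p ∈ t, (-(X p.2 ^ D s(p.1, p.2)) : MvPolynomial (Fin n) ℤ)
      = (-1 : MvPolynomial (Fin n) ℤ) ^ t.card * ∏ p ∈ t, X p.2 ^ D s(p.1, p.2) := by
    rw [← Finset.prod_const, ← Finset.prod_mul_distrib]
    exact Finset.prod_congr rfl fun p _ => (neg_one_mul _).symm
  rw [h2, prod_X_pow, prod_X_pow, mul_assoc, monomial_mul, one_mul]
  have h3 : mSet G D t = (∑ p ∈ t, Finsupp.single p.2 (D s(p.1, p.2)))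
      + ∑ p ∈ (ES G) \ t, Finsupp.single p.1 (D s(p.1, p.2)) := by
    rw [mSet, ← Finset.sum_sdiff ht]
    rw [add_comm]
    congr 1
    · exact Finset.sum_congr rfl fun p hp => by rw [if_pos hp]
    · exact Finset.sum_congr rfl fun p hp => by
        rw [if_neg (Finset.mem_sdiff.mp hp).2]
  rw [h3]
  have h4 : ((-1 : MvPolynomial (Fin n) ℤ) ^ t.card) = C ((-1 : ℤ) ^ t.card) := by
    rw [map_pow, map_neg, map_one]
  rw [h4, C_mul_monomial, mul_one]

lemma coeff_augPoly (G : SimpleGraph (Fin n)) (D : Sym2 (Fin n) → ℕ) (m : Fin n →₀ ℕ) :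
    coeff m (augPoly G D)
      = ∑ t ∈ (ES G).powerset, if mSet G D t = m then (-1 : ℤ) ^ t.card else 0 := by
  rw [augPoly_expand, MvPolynomial.coeff_sum]
  exact Finset.sum_congr rfl fun t _ => by rw [coeff_monomial]


lemma orient_injOn (G : SimpleGraph (Fin n)) (dir : Fin n → Fin n → Prop) :
    Set.InjOn (orient dir) (ES G) := by
  intro p hp q hq h
  rw [Finset.mem_coe, mem_ES] at hp hq
  unfold orient tl hd at h
  by_cases h1 : dir p.1 p.2 <;> by_cases h2 : dir q.1 q.2 <;>
    simp only [if_pos, if_neg, h1, h2, if_true, if_false, Prod.mk.injEq] at h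
  · exact Prod.ext h.1 h.2
  · exact absurd (h.1 ▸ h.2 ▸ hp.1) (not_lt.mpr hq.1.le)
  · exact absurd (h.1 ▸ h.2 ▸ hp.1) (not_lt.mpr hq.1.le)
  · exact Prod.ext h.2 h.1

lemma sym2_orient (dir : Fin n → Fin n → Prop) (p : Fin n × Fin n) :
    s((orient dir p).1, (orient dir p).2) = s(p.1, p.2) := by
  unfold orient tl hd
  by_cases h : dir p.1 p.2 <;> simp [h, Sym2.eq_swap]

lemma dir_orient {G : SimpleGraph (Fin n)} {dir : Fin n → Fin n → Prop}
    (hor : IsOrientation G dir) {p : Fin n × Fin n} (hp : p ∈ ES G) :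
    dir (orient dir p).1 (orient dir p).2 := by
  rw [mem_ES] at hp
  unfold orient tl hd
  by_cases h : dir p.1 p.2
  · simpa [h] using h
  · simp only [h, if_false]
    exact ((hor.2 p.2 p.1 hp.2.symm).mpr (by simpa using h))

/-- Any element of `A` with all pairs directed is `orient` of a unique sorted pair. -/
lemma exists_orient {G : SimpleGraph (Fin n)} {dir : Fin n → Fin n → Prop}
    (hor : IsOrientation G dir) {q : Fin n × Fin n} (hq : dir q.1 q.2) :
    ∃ p ∈ ES G, orient dir p = q := by
  have hadj : G.Adj q.1 q.2 := hor.1 _ _ hq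
  rcases lt_or_gt_of_ne hadj.ne with h | h
  · refine ⟨q, mem_ES.mpr ⟨h, hadj⟩, ?_⟩
    unfold orient tl hd
    simp [hq]
  · refine ⟨q.swap, mem_ES.mpr ⟨h, hadj.symm⟩, ?_⟩
    have hnd : ¬ dir q.2 q.1 := (hor.2 q.1 q.2 hadj).mp hq
    unfold orient tl hd
    simp [Prod.swap, hnd]

lemma augPoly_homog (G : SimpleGraph (Fin n)) (D : Sym2 (Fin n) → ℕ) :
    (augPoly G D).IsHomogeneous (∑ p ∈ ES G, D s(p.1, p.2)) := by
  apply MvPolynomial.IsHomogeneous.prod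
  intro p _
  have h1 := ((isHomogeneous_X ℤ p.1).pow (D s(p.1, p.2))).sub
    ((isHomogeneous_X ℤ p.2).pow (D s(p.1, p.2)))
  simpa using h1

lemma graphPoly_homog (G : SimpleGraph (Fin n)) :
    (graphPoly G).IsHomogeneous (ES G).card := by
  have := MvPolynomial.IsHomogeneous.prod (ES G)
    (fun p => (X p.1 - X p.2 : MvPolynomial (Fin n) ℤ)) (fun _ => 1)
    (fun p _ => (isHomogeneous_X ℤ p.1).sub (isHomogeneous_X ℤ p.2))
  simpa [graphPoly, ES] using this

lemma graphPoly_ne_zero (G : SimpleGraph (Fin n)) : graphPoly G ≠ 0 := by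
  rw [graphPoly, Finset.prod_ne_zero_iff]
  intro p hp
  rw [Finset.mem_filter] at hp
  intro h
  have h2 : (X p.1 : MvPolynomial (Fin n) ℤ) = X p.2 := sub_eq_zero.mp h
  exact absurd (MvPolynomial.X_injective h2) hp.2.1.ne

lemma graphPoly_dvd (G : SimpleGraph (Fin n)) (D : Sym2 (Fin n) → ℕ) :
    graphPoly G ∣ augPoly G D :=
  Finset.prod_dvd_prod_of_dvd _ _ fun p _ => sub_dvd_pow_sub_pow _ _ _

lemma sum_mStar (G : SimpleGraph (Fin n)) (dir : Fin n → Fin n → Prop)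
    (D : Sym2 (Fin n) → ℕ) :
    (∑ v, mStar G dir D v) = ∑ p ∈ ES G, D s(p.1, p.2) := by
  rw [mStar]
  simp only [Finsupp.coe_finset_sum, Finset.sum_apply]
  rw [Finset.sum_comm]
  refine Finset.sum_congr rfl fun p _ => ?_
  simp [Finsupp.single_apply]

lemma mStar_le {G : SimpleGraph (Fin n)} {dir : Fin n → Fin n → Prop}
    (hor : IsOrientation G dir) (D : Sym2 (Fin n) → ℕ) {k : ℕ}
    (hk : ∀ v, ∑ u ∈ Finset.univ.filter (fun u => dir u v), D s(u, v) ≤ k)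
    (v : Fin n) : mStar G dir D v ≤ k := by
  refine le_trans (le_of_eq ?_) (hk v)
  rw [mStar]
  simp only [Finsupp.coe_finset_sum, Finset.sum_apply]
  rw [show (∑ p ∈ ES G, Finsupp.single (hd dir p) (D s(p.1, p.2)) v)
      = ∑ p ∈ (ES G).filter (fun p => hd dir p = v), D s(p.1, p.2) from ?_]
  · refine Finset.sum_nbij' (fun p => tl dir p)
      (fun u => if u < v then (u, v) else (v, u)) ?_ ?_ ?_ ?_ ?_
    · intro p hp
      beta_reduce
      rw [Finset.mem_filter] at hp
      have h2 : dir (tl dir p) (hd dir p) := dir_orient hor hp.1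
      rw [hp.2] at h2
      simp [h2]
    · intro u hu
      beta_reduce
      rw [Finset.mem_filter] at hu
      have hdir := hu.2
      have hadj := hor.1 _ _ hdir
      rcases lt_or_gt_of_ne hadj.ne with h | h
      · rw [if_pos h, Finset.mem_filter, mem_ES]
        exact ⟨⟨h, hadj⟩, by simp [hd, hdir]⟩
      · rw [if_neg (not_lt.mpr h.le), Finset.mem_filter, mem_ES]
        refine ⟨⟨h, hadj.symm⟩, ?_⟩
        have : ¬ dir v u := (hor.2 u v hadj).mp hdir
        simp [hd, this]
    · intro p hp
      beta_reduce
      rw [Finset.mem_filter, mem_ES] at hp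
      by_cases h : dir p.1 p.2
      · have htl : tl dir p = p.1 := by simp [tl, h]
        have hv : p.2 = v := by rw [← hp.2]; simp [hd, h]
        rw [htl, if_pos (hv ▸ hp.1.1), ← hv]
      · have htl : tl dir p = p.2 := by simp [tl, h]
        have hv : p.1 = v := by rw [← hp.2]; simp [hd, h]
        rw [htl, if_neg (hv ▸ (not_lt.mpr hp.1.1.le)), ← hv]
    · intro u hu
      beta_reduce
      rw [Finset.mem_filter] at hu
      have hdir := hu.2
      have hadj := hor.1 _ _ hdir
      rcases lt_or_gt_of_ne hadj.ne with h | h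
      · rw [if_pos h]; simp [tl, hdir]
      · rw [if_neg (not_lt.mpr h.le)]
        have : ¬ dir v u := (hor.2 u v hadj).mp hdir
        simp [tl, this]
    · intro p hp
      beta_reduce
      rw [Finset.mem_filter, mem_ES] at hp
      by_cases h : dir p.1 p.2
      · have : tl dir p = p.1 := by simp [tl, h]
        rw [this]
        have : p.2 = v := by simpa [hd, h] using hp.2
        rw [← this]
      · have : tl dir p = p.2 := by simp [tl, h]
        rw [this]
        have h1 : p.1 = v := by simpa [hd, h] using hp.2
        rw [← h1]
        exact congrArg D (Sym2.eq_swap)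
  · rw [Finset.sum_filter]
    refine Finset.sum_congr rfl fun p _ => ?_
    rw [Finsupp.single_apply]

/-- The set of "flipped" edges for a choice set `t`. -/
noncomputable def flips (G : SimpleGraph (Fin n)) (dir : Fin n → Fin n → Prop)
    (t : Finset (Fin n × Fin n)) : Finset (Fin n × Fin n) :=
  (ES G).filter (fun p => ¬ (p ∈ t ↔ dir p.1 p.2))

noncomputable def Phi (G : SimpleGraph (Fin n)) (dir : Fin n → Fin n → Prop)
    (t : Finset (Fin n × Fin n)) : Finset (Fin n × Fin n) :=
  (flips G dir t).image (orient dir)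

noncomputable def Psi (G : SimpleGraph (Fin n)) (dir : Fin n → Fin n → Prop)
    (A : Finset (Fin n × Fin n)) : Finset (Fin n × Fin n) :=
  (ES G).filter (fun p => ¬ (dir p.1 p.2 ↔ orient dir p ∈ A))

lemma card_Phi (G : SimpleGraph (Fin n)) (dir : Fin n → Fin n → Prop)
    (t : Finset (Fin n × Fin n)) : (Phi G dir t).card = (flips G dir t).card := by
  refine Finset.card_image_of_injOn ((orient_injOn G dir).mono ?_)
  intro p hp
  exact Finset.mem_coe.mpr (Finset.filter_subset _ _ (Finset.mem_coe.mp hp))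

lemma sign_eq (G : SimpleGraph (Fin n)) (dir : Fin n → Fin n → Prop)
    {t : Finset (Fin n × Fin n)} (ht : t ⊆ ES G) :
    (-1 : ℤ) ^ t.card
      = (-1) ^ ((ES G).filter (fun p => dir p.1 p.2)).card * (-1) ^ (flips G dir t).card := by
  set S₀ := (ES G).filter (fun p => dir p.1 p.2) with hS₀
  have hunion : flips G dir t = (t \ S₀) ∪ (S₀ \ t) := by
    ext p
    simp only [flips, hS₀, Finset.mem_filter, Finset.mem_union, Finset.mem_sdiff]
    constructor
    · rintro ⟨hpE, hne⟩
      by_cases hpt : p ∈ t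
      · exact Or.inl ⟨hpt, fun hps => hne ⟨fun _ => hps.2, fun _ => hpt⟩⟩
      · refine Or.inr ⟨⟨hpE, ?_⟩, hpt⟩
        by_contra hnd
        exact hne ⟨fun h => absurd h hpt, fun h => absurd h hnd⟩
    · rintro (⟨hpt, hns⟩ | ⟨⟨hpE, hdir⟩, hpt⟩)
      · exact ⟨ht hpt, fun h => hns ⟨ht hpt, h.mp hpt⟩⟩
      · exact ⟨hpE, fun h => hpt (h.mpr hdir)⟩
  have hdisj : Disjoint (t \ S₀) (S₀ \ t) := disjoint_sdiff_sdiff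
  have hcard : (flips G dir t).card = (t \ S₀).card + (S₀ \ t).card := by
    rw [hunion, Finset.card_union_of_disjoint hdisj]
  have h1 : (t \ S₀).card + (t ∩ S₀).card = t.card := Finset.card_sdiff_add_card_inter t S₀
  have h2 : (S₀ \ t).card + (S₀ ∩ t).card = S₀.card := Finset.card_sdiff_add_card_inter S₀ t
  have h3 : (t ∩ S₀).card = (S₀ ∩ t).card := by rw [Finset.inter_comm]
  have hsum : t.card + S₀.card = (flips G dir t).card + 2 * (t ∩ S₀).card := by omega
  have key : (-1 : ℤ) ^ (t.card + S₀.card) = (-1) ^ (flips G dir t).card := by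
    rw [hsum, pow_add, pow_mul]
    norm_num
  have h4 : ((-1 : ℤ) ^ S₀.card) * ((-1) ^ S₀.card) = 1 := by
    rw [← pow_add]
    exact Even.neg_one_pow ⟨S₀.card, rfl⟩
  calc (-1 : ℤ) ^ t.card = (-1) ^ t.card * (((-1) ^ S₀.card) * ((-1) ^ S₀.card)) := by
        rw [h4, mul_one]
    _ = ((-1) ^ (t.card + S₀.card)) * (-1) ^ S₀.card := by rw [pow_add]; ring
    _ = (-1) ^ S₀.card * (-1) ^ (flips G dir t).card := by rw [key, mul_comm]

lemma orient_mem_Phi {G : SimpleGraph (Fin n)} (dir : Fin n → Fin n → Prop)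
    {t : Finset (Fin n × Fin n)} {p : Fin n × Fin n} (hp : p ∈ ES G) :
    orient dir p ∈ Phi G dir t ↔ p ∈ flips G dir t := by
  constructor
  · intro h
    rcases Finset.mem_image.mp h with ⟨p', hp', heq⟩
    have : p' = p := orient_injOn G dir (Finset.mem_coe.mpr
      (Finset.filter_subset _ _ hp')) (Finset.mem_coe.mpr hp) heq
    exact this ▸ hp'
  · intro h
    exact Finset.mem_image_of_mem _ h

lemma Psi_Phi {G : SimpleGraph (Fin n)} (dir : Fin n → Fin n → Prop)
    {t : Finset (Fin n × Fin n)} (ht : t ⊆ ES G) : Psi G dir (Phi G dir t) = t := by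
  ext p
  by_cases hpE : p ∈ ES G
  · rw [Psi, Finset.mem_filter]
    rw [show (orient dir p ∈ Phi G dir t) = (p ∈ flips G dir t) from
      propext (orient_mem_Phi dir hpE)]
    rw [show (p ∈ flips G dir t) = (p ∈ ES G ∧ ¬ (p ∈ t ↔ dir p.1 p.2)) from
      propext (Finset.mem_filter)]
    constructor
    · intro h
      by_contra hpt
      exact h.2 ⟨fun hd => ⟨hpE, fun hiff => hpt (hiff.mpr hd)⟩, fun hf => by tauto⟩
    · intro hpt
      refine ⟨hpE, fun hiff => ?_⟩
      tauto
  · constructor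
    · intro h
      exact absurd ((Finset.mem_filter.mp h).1) hpE
    · intro h
      exact absurd (ht h) hpE

lemma Phi_Psi {G : SimpleGraph (Fin n)} {dir : Fin n → Fin n → Prop}
    (hor : IsOrientation G dir) {A : Finset (Fin n × Fin n)}
    (hA : ∀ p ∈ A, dir p.1 p.2) : Phi G dir (Psi G dir A) = A := by
  have hflips : flips G dir (Psi G dir A) = (ES G).filter (fun p => orient dir p ∈ A) := by
    ext p
    simp only [flips, Psi, Finset.mem_filter]
    tauto
  rw [Phi, hflips]
  ext q
  constructor
  · intro h
    rcases Finset.mem_image.mp h with ⟨p, hp, heq⟩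
    exact heq ▸ (Finset.mem_filter.mp hp).2
  · intro hq
    rcases exists_orient hor (hA q hq) with ⟨p, hpE, heq⟩
    exact Finset.mem_image.mpr ⟨p, Finset.mem_filter.mpr ⟨hpE, heq ▸ hq⟩, heq⟩

lemma augIn_Phi (G : SimpleGraph (Fin n)) (dir : Fin n → Fin n → Prop)
    (D : Sym2 (Fin n) → ℕ) (t : Finset (Fin n × Fin n)) (v : Fin n) :
    augIn D (Phi G dir t) v
      = ∑ p ∈ flips G dir t, if hd dir p = v then D s(p.1, p.2) else 0 := by
  rw [augIn, Finset.sum_filter, Phi, Finset.sum_image ?inj]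
  case inj =>
    intro p hp q hq h
    exact orient_injOn G dir
      (Finset.mem_coe.mpr (Finset.filter_subset _ _ hp))
      (Finset.mem_coe.mpr (Finset.filter_subset _ _ hq)) h
  refine Finset.sum_congr rfl fun p _ => ?_
  rw [show s((orient dir p).1, (orient dir p).2) = s(p.1, p.2) from sym2_orient dir p]
  rfl

lemma augOut_Phi (G : SimpleGraph (Fin n)) (dir : Fin n → Fin n → Prop)
    (D : Sym2 (Fin n) → ℕ) (t : Finset (Fin n × Fin n)) (v : Fin n) :
    augOut D (Phi G dir t) v
      = ∑ p ∈ flips G dir t, if tl dir p = v then D s(p.1, p.2) else 0 := by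
  rw [augOut, Finset.sum_filter, Phi, Finset.sum_image ?inj]
  case inj =>
    intro p hp q hq h
    exact orient_injOn G dir
      (Finset.mem_coe.mpr (Finset.filter_subset _ _ hp))
      (Finset.mem_coe.mpr (Finset.filter_subset _ _ hq)) h
  refine Finset.sum_congr rfl fun p _ => ?_
  rw [show s((orient dir p).1, (orient dir p).2) = s(p.1, p.2) from sym2_orient dir p]
  rfl

lemma mSet_eq_mStar_iff (G : SimpleGraph (Fin n)) (dir : Fin n → Fin n → Prop)
    (D : Sym2 (Fin n) → ℕ) {t : Finset (Fin n × Fin n)} (ht : t ⊆ ES G) :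
    mSet G D t = mStar G dir D
      ↔ ∀ v, augIn D (Phi G dir t) v = augOut D (Phi G dir t) v := by
  have hsub : flips G dir t ⊆ ES G := Finset.filter_subset _ _
  have hmSet : ∀ v, mSet G D t v
      = (∑ p ∈ ES G \ flips G dir t, if hd dir p = v then D s(p.1, p.2) else 0)
        + ∑ p ∈ flips G dir t, if tl dir p = v then D s(p.1, p.2) else 0 := by
    intro v
    rw [mSet]
    simp only [Finsupp.coe_finset_sum, Finset.sum_apply]
    rw [← Finset.sum_sdiff hsub]
    congr 1
    · refine Finset.sum_congr rfl fun p hp => ?_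
      rcases Finset.mem_sdiff.mp hp with ⟨hpE, hpf⟩
      have hiff : p ∈ t ↔ dir p.1 p.2 := by
        by_contra h
        exact hpf (Finset.mem_filter.mpr ⟨hpE, h⟩)
      rw [Finsupp.single_apply]
      have heq : (if p ∈ t then p.2 else p.1) = hd dir p := by
        by_cases h : dir p.1 p.2
        · rw [if_pos (hiff.mpr h)]; simp [hd, h]
        · rw [if_neg (fun hmem => h (hiff.mp hmem))]; simp [hd, h]
      rw [heq]
    · refine Finset.sum_congr rfl fun p hp => ?_
      rcases Finset.mem_filter.mp hp with ⟨hpE, hne⟩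
      rw [Finsupp.single_apply]
      have heq : (if p ∈ t then p.2 else p.1) = tl dir p := by
        by_cases h : dir p.1 p.2
        · rw [if_neg (fun hmem => hne ⟨fun _ => h, fun _ => hmem⟩)]; simp [tl, h]
        · rw [if_pos (by tauto)]; simp [tl, h]
      rw [heq]
  have hmStar : ∀ v, mStar G dir D v
      = (∑ p ∈ ES G \ flips G dir t, if hd dir p = v then D s(p.1, p.2) else 0)
        + ∑ p ∈ flips G dir t, if hd dir p = v then D s(p.1, p.2) else 0 := by
    intro v
    rw [mStar]
    simp only [Finsupp.coe_finset_sum, Finset.sum_apply]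
    rw [← Finset.sum_sdiff hsub]
    congr 1 <;> exact Finset.sum_congr rfl fun p _ => by rw [Finsupp.single_apply]
  constructor
  · intro h v
    have hv : mSet G D t v = mStar G dir D v := by rw [h]
    rw [hmSet v, hmStar v] at hv
    rw [augIn_Phi, augOut_Phi]
    omega
  · intro h
    ext v
    have := h v
    rw [augIn_Phi, augOut_Phi] at this
    rw [hmSet v, hmStar v]
    omega

lemma sum_neg_one_pow (T : Finset (Finset (Fin n × Fin n))) :
    ∑ A ∈ T, (-1 : ℤ) ^ A.card
      = ((T.filter fun A => Even A.card).card : ℤ)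
        - ((T.filter fun A => Odd A.card).card : ℤ) := by
  rw [← Finset.sum_filter_add_sum_filter_not T (fun A => Even A.card)]
  have h1 : ∑ A ∈ T.filter (fun A => Even A.card), (-1 : ℤ) ^ A.card
      = ((T.filter fun A => Even A.card).card : ℤ) := by
    rw [Finset.sum_congr rfl (fun A hA => Even.neg_one_pow (Finset.mem_filter.mp hA).2)]
    simp
  have h2 : T.filter (fun A => ¬ Even A.card) = T.filter (fun A => Odd A.card) := by
    refine Finset.filter_congr fun A _ => ?_
    rw [Nat.not_even_iff_odd]
  have h3 : ∑ A ∈ T.filter (fun A => Odd A.card), (-1 : ℤ) ^ A.card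
      = -((T.filter fun A => Odd A.card).card : ℤ) := by
    rw [Finset.sum_congr rfl (fun A hA => Odd.neg_one_pow (Finset.mem_filter.mp hA).2)]
    simp
  rw [h1, h2, h3]
  ring

lemma coeff_mStar {G : SimpleGraph (Fin n)} {dir : Fin n → Fin n → Prop}
    (hor : IsOrientation G dir) (D : Sym2 (Fin n) → ℕ) :
    coeff (mStar G dir D) (augPoly G D)
      = (-1 : ℤ) ^ ((ES G).filter (fun p => dir p.1 p.2)).card *
        (((Finset.univ.filter fun A : Finset (Fin n × Fin n) =>
            IsEulerianStructure dir D A ∧ Even A.card).card : ℤ)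
         - ((Finset.univ.filter fun A : Finset (Fin n × Fin n) =>
            IsEulerianStructure dir D A ∧ Odd A.card).card : ℤ)) := by
  rw [coeff_augPoly]
  have step1 : (∑ t ∈ (ES G).powerset,
        if mSet G D t = mStar G dir D then (-1 : ℤ) ^ t.card else 0)
      = ∑ A ∈ Finset.univ.filter
          (fun A : Finset (Fin n × Fin n) => ∀ p ∈ A, dir p.1 p.2),
          if (∀ v, augIn D A v = augOut D A v) then
            (-1 : ℤ) ^ ((ES G).filter (fun p => dir p.1 p.2)).card * (-1 : ℤ) ^ A.card
          else 0 := by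
    refine Finset.sum_nbij' (Phi G dir) (Psi G dir) ?_ ?_ ?_ ?_ ?_
    · intro t _
      refine Finset.mem_filter.mpr ⟨Finset.mem_univ _, fun q hq => ?_⟩
      rcases Finset.mem_image.mp hq with ⟨p, hp, heq⟩
      exact heq ▸ dir_orient hor (Finset.filter_subset _ _ hp)
    · intro A _
      exact Finset.mem_powerset.mpr (Finset.filter_subset _ _)
    · intro t ht
      exact Psi_Phi dir (Finset.mem_powerset.mp ht)
    · intro A hA
      exact Phi_Psi hor (Finset.mem_filter.mp hA).2
    · intro t ht
      have ht' := Finset.mem_powerset.mp ht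
      refine if_congr (mSet_eq_mStar_iff G dir D ht') ?_ rfl
      rw [card_Phi]
      exact sign_eq G dir ht'
  rw [step1]
  have hset : (Finset.univ.filter
        (fun A : Finset (Fin n × Fin n) => ∀ p ∈ A, dir p.1 p.2)).filter
        (fun A => ∀ v, augIn D A v = augOut D A v)
      = Finset.univ.filter (fun A : Finset (Fin n × Fin n) =>
          IsEulerianStructure dir D A) := by
    ext A
    simp only [Finset.mem_filter, Finset.mem_univ, true_and]
    exact Iff.rfl
  rw [← Finset.sum_filter, hset, ← Finset.mul_sum, sum_neg_one_pow]
  have heven : (Finset.univ.filter (fun A : Finset (Fin n × Fin n) =>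
        IsEulerianStructure dir D A)).filter (fun A => Even A.card)
      = Finset.univ.filter (fun A : Finset (Fin n × Fin n) =>
          IsEulerianStructure dir D A ∧ Even A.card) := by
    ext A
    simp only [Finset.mem_filter, Finset.mem_univ, true_and]
  have hodd : (Finset.univ.filter (fun A : Finset (Fin n × Fin n) =>
        IsEulerianStructure dir D A)).filter (fun A => Odd A.card)
      = Finset.univ.filter (fun A : Finset (Fin n × Fin n) =>
          IsEulerianStructure dir D A ∧ Odd A.card) := by
    ext A
    simp only [Finset.mem_filter, Finset.mem_univ, true_and]
  rw [heven, hodd]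

end ATwork

/-- If in an augmented orientation `(G, D, O)` with maximum augmented in-degree `k` the
numbers of even and odd Eulerian structures differ, then
`AT(G) - 1 ≤ α(W_{G,D}) ≤ k`. -/
theorem AT_le_of_eulerian_structure_counts {n : ℕ} (G : SimpleGraph (Fin n))
    (dir : Fin n → Fin n → Prop) (D : Sym2 (Fin n) → ℕ) (k : ℕ)
    (hor : IsOrientation G dir) (hD : ∀ e ∈ G.edgeSet, 0 < D e)
    (hk : ∀ v, ∑ u ∈ Finset.univ.filter (fun u => dir u v), D s(u, v) ≤ k)
    (hne : (Finset.univ.filter fun A : Finset (Fin n × Fin n) =>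
              IsEulerianStructure dir D A ∧ Even A.card).card ≠
           (Finset.univ.filter fun A : Finset (Fin n × Fin n) =>
              IsEulerianStructure dir D A ∧ Odd A.card).card) :
    AT G - 1 ≤ alphaP (augPoly G D) ∧ alphaP (augPoly G D) ≤ k := by
  have hcoeff : MvPolynomial.coeff (ATwork.mStar G dir D) (augPoly G D) ≠ 0 := by
    rw [ATwork.coeff_mStar hor D]
    refine mul_ne_zero (pow_ne_zero _ (by norm_num)) ?_
    rw [sub_ne_zero]
    exact_mod_cast hne
  have hsupp : ATwork.mStar G dir D ∈ (augPoly G D).support :=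
    MvPolynomial.mem_support_iff.mpr hcoeff
  have hWne : augPoly G D ≠ 0 := fun h => hcoeff (by rw [h]; simp)
  have htotW : (augPoly G D).totalDegree = ∑ p ∈ ATwork.ES G, D s(p.1, p.2) :=
    (ATwork.augPoly_homog G D).totalDegree hWne
  have hdeg : ∀ m : Fin n →₀ ℕ, (∑ i, m i) = Finsupp.weight 1 m := by
    intro m
    rw [show (Finsupp.weight 1 : (Fin n →₀ ℕ) →+ ℕ) = Finsupp.weight (fun _ => 1) from rfl,
      ← Finsupp.degree_eq_weight_one, Finsupp.degree]
    exact (Finset.sum_subset (Finset.subset_univ _)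
      (fun i _ hi => Finsupp.notMem_support_iff.mp hi)).symm
  have hmember : k ∈ {k' | ∃ m ∈ (augPoly G D).support,
      (∑ i, m i) = (augPoly G D).totalDegree ∧ ∀ i, m i ≤ k'} := by
    refine ⟨ATwork.mStar G dir D, hsupp, ?_, fun i => ATwork.mStar_le hor D hk i⟩
    rw [ATwork.sum_mStar, htotW]
  constructor
  · -- AT G - 1 ≤ alphaP (augPoly G D)
    have hAT : AT G - 1 = alphaP (graphPoly G) := by
      rw [AT]
      omega
    rw [hAT, alphaP]
    have halpha : alphaP (augPoly G D) ∈ {k' | ∃ m ∈ (augPoly G D).support,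
        (∑ i, m i) = (augPoly G D).totalDegree ∧ ∀ i, m i ≤ k'} :=
      Nat.sInf_mem ⟨k, hmember⟩
    obtain ⟨m, hm, _, hmb⟩ := halpha
    obtain ⟨Q, hQ⟩ := ATwork.graphPoly_dvd G D
    rw [hQ] at hm
    have := MvPolynomial.support_mul (graphPoly G) Q hm
    rw [Finset.mem_add] at this
    obtain ⟨mf, hmf, mQ, hmQ, hadd⟩ := this
    refine Nat.sInf_le ⟨mf, hmf, ?_, fun i => ?_⟩
    · rw [hdeg mf, (ATwork.graphPoly_homog G) (MvPolynomial.mem_support_iff.mp hmf),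
        (ATwork.graphPoly_homog G).totalDegree (ATwork.graphPoly_ne_zero G)]
    · refine le_trans ?_ (hmb i)
      rw [← hadd, Finsupp.add_apply]
      exact Nat.le_add_right _ _
  · exact Nat.sInf_le hmember
end

section
/- In any internal 3-orientation of a triangular graph, no interior edge is directed toward an exterior vertex. -/
attribute [local instance] Classical.propDecidable

/-- A (combinatorial) plane triangulation on vertex set `Fin n`, given by a
counterclockwise rotation system together with a distinguished outer triangle.
All faces (traced by the rotation system) are triangles, and the Euler count
`|E| = 3n - 6` guarantees genus `0`. -/
structure PlaneTriangulation (n : ℕ) where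
  G : SimpleGraph (Fin n)
  conn : G.Connected
  /-- `next v u` is the neighbour of `v` following `u` in counterclockwise order around `v`. -/
  next : Fin n → Fin n → Fin n
  next_adj : ∀ v u, G.Adj v u → G.Adj v (next v u)
  /-- the rotation at `v` is a single cycle on the neighbourhood of `v` -/
  next_cyclic : ∀ v u w, G.Adj v u → G.Adj v w → ∃ k, (fun x => next v x)^[k] u = w
  /-- every face is a triangle: the face-tracing map on darts has order 3 -/
  faces_tri : ∀ u v, G.Adj u v →
    (fun d : Fin n × Fin n => (d.2, next d.2 d.1))^[3] (u, v) = (u, v)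
  /-- the three outer (exterior) vertices, in counterclockwise order -/
  outer : Fin 3 → Fin n
  outer_inj : Function.Injective outer
  outer_adj : ∀ i j, i ≠ j → G.Adj (outer i) (outer j)
  /-- the outer triangle bounds a face -/
  outer_face : next (outer 2) (outer 0) = outer 1 ∧ next (outer 1) (outer 2) = outer 0 ∧
    next (outer 0) (outer 1) = outer 2
  /-- Euler's relation for plane triangulations -/
  euler : G.edgeSet.ncard = 3 * n - 6

/-- A vertex is interior when it is not one of the three outer vertices. -/
def PlaneTriangulation.InteriorVertex {n : ℕ} (T : PlaneTriangulation n) (v : Fin n) : Prop :=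
  ∀ i, v ≠ T.outer i

/-- An edge is interior when it is not an edge of the outer triangle. -/
def PlaneTriangulation.InteriorEdge {n : ℕ} (T : PlaneTriangulation n) (u v : Fin n) : Prop :=
  T.G.Adj u v ∧ ¬ (∃ i j, u = T.outer i ∧ v = T.outer j)

/-- An internal 3-orientation: an orientation of the interior edges in which every
interior vertex has in-degree exactly 3. -/
structure Internal3Orientation {n : ℕ} (T : PlaneTriangulation n) where
  /-- `dir u v`: the interior edge `{u,v}` is directed from `u` to `v` -/
  dir : Fin n → Fin n → Prop
  dir_edge : ∀ u v, dir u v → T.InteriorEdge u v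
  total : ∀ u v, T.InteriorEdge u v → (dir u v ↔ ¬ dir v u)
  indeg : ∀ v, T.InteriorVertex v → {u | dir u v}.ncard = 3

/-- The data of a realizer: a partition-with-orientation of the interior edges into three
colour classes (red = 0, green = 1, blue = 2) such that every interior vertex has in-degree
one in each colour.  `col u v = some c` means the edge `{u,v}` is directed from `u` to `v`
and has colour `c`. -/
structure PreRealizer {n : ℕ} (T : PlaneTriangulation n) where
  col : Fin n → Fin n → Option (Fin 3)
  col_edge : ∀ u v c, col u v = some c → T.InteriorEdge u v
  col_total : ∀ u v, T.InteriorEdge u v → ((col u v).isSome ↔ col v u = none)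
  indeg_one : ∀ v c, T.InteriorVertex v → {u | col u v = some c}.ncard = 1

/-- The type of the dart from `v` towards `u`, encoding the counterclockwise pattern
incoming red (0), outgoing blue (1), incoming green (2), outgoing red (3),
incoming blue (4), outgoing green (5). -/
def PreRealizer.dartType {n : ℕ} {T : PlaneTriangulation n} (R : PreRealizer T)
    (v u : Fin n) : ℕ :=
  if R.col u v = some 0 then 0
  else if R.col v u = some 2 then 1
  else if R.col u v = some 1 then 2
  else if R.col v u = some 0 then 3
  else if R.col u v = some 2 then 4
  else 5

/-- The degree of a vertex. -/
noncomputable def PlaneTriangulation.deg {n : ℕ} (T : PlaneTriangulation n) (v : Fin n) : ℕ :=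
  {u | T.G.Adj v u}.ncard

/-- A realizer (Schnyder wood): starting at the unique incoming red edge, the types of the
darts around any interior vertex are (weakly) increasing along one full counterclockwise
rotation; this is exactly the prescribed cyclic pattern. -/
structure Realizer {n : ℕ} (T : PlaneTriangulation n) extends PreRealizer T where
  pattern : ∀ v, T.InteriorVertex v → ∀ u₀, col u₀ v = some 0 →
    ∀ k l : ℕ, k ≤ l → l < T.deg v →
      toPreRealizer.dartType v ((fun x => T.next v x)^[k] u₀) ≤
      toPreRealizer.dartType v ((fun x => T.next v x)^[l] u₀)

/-- A directed cycle with respect to a directed-edge relation `dir`. -/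
structure DirCycle {n : ℕ} (dir : Fin n → Fin n → Prop) where
  len : ℕ
  three_le : 3 ≤ len
  vtx : ZMod len → Fin n
  inj : Function.Injective vtx
  step : ∀ i, dir (vtx i) (vtx (i + 1))

/-- The vertex set of a directed cycle. -/
def DirCycle.vertexSet {n : ℕ} {dir : Fin n → Fin n → Prop} (C : DirCycle dir) :
    Set (Fin n) := Set.range C.vtx

/-- The set of vertices strictly inside a separating vertex set `S`: the vertices not in `S`
from which every walk to an exterior vertex meets `S`. -/
def PlaneTriangulation.InsideSet {n : ℕ} (T : PlaneTriangulation n) (S : Set (Fin n)) :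
    Set (Fin n) :=
  {w | w ∉ S ∧ ∀ x, ¬ T.InteriorVertex x → ∀ p : T.G.Walk w x, ∃ y ∈ p.support, y ∈ S}

/-- The neighbours of `v` strictly between `u` and `w` in counterclockwise order around `v`. -/
noncomputable def PlaneTriangulation.betweenSet {n : ℕ} (T : PlaneTriangulation n)
    (v u w : Fin n) : Set (Fin n) :=
  {x | ∃ k, 0 < k ∧ k < sInf {m | 0 < m ∧ (fun y => T.next v y)^[m] u = w} ∧
    (fun y => T.next v y)^[k] u = x}

/-- A directed cycle is counterclockwise when its interior lies to its left: at each vertex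
of the cycle, the neighbours counterclockwise between the incoming and the outgoing cycle
edge belong to the closed interior of the cycle. -/
def IsCCW {n : ℕ} (T : PlaneTriangulation n) {dir : Fin n → Fin n → Prop}
    (C : DirCycle dir) : Prop :=
  ∀ i : ZMod C.len, T.betweenSet (C.vtx i) (C.vtx (i - 1)) (C.vtx (i + 1)) ⊆
    C.vertexSet ∪ T.InsideSet C.vertexSet

/-- A directed cycle is clockwise when its interior lies to its right. -/
def IsCW {n : ℕ} (T : PlaneTriangulation n) {dir : Fin n → Fin n → Prop}
    (C : DirCycle dir) : Prop :=
  ∀ i : ZMod C.len, T.betweenSet (C.vtx i) (C.vtx (i + 1)) (C.vtx (i - 1)) ⊆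
    C.vertexSet ∪ T.InsideSet C.vertexSet

lemma PlaneTriangulation.interiorEdge_symm {n : ℕ} (T : PlaneTriangulation n) {a b : Fin n}
    (h : T.InteriorEdge a b) : T.InteriorEdge b a := by
  obtain ⟨hadj, hno⟩ := h
  exact ⟨hadj.symm, fun ⟨i, j, hi, hj⟩ => hno ⟨j, i, hj, hi⟩⟩

lemma Internal3Orientation.not_both {n : ℕ} {T : PlaneTriangulation n}
    (O : Internal3Orientation T) {a b : Fin n} (h1 : O.dir a b) (h2 : O.dir b a) : False := by
  exact ((O.total a b (O.dir_edge a b h1)).mp h1) h2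

lemma Internal3Orientation.some_dir {n : ℕ} {T : PlaneTriangulation n}
    (O : Internal3Orientation T) {a b : Fin n} (h : T.InteriorEdge a b) :
    O.dir a b ∨ O.dir b a := by
  by_cases hab : O.dir a b
  · exact Or.inl hab
  · exact Or.inr ((O.total b a (T.interiorEdge_symm h)).mpr
      (fun hba => hab ((O.total a b h).mpr (fun h' => O.not_both h' hba))))

/-- In any internal 3-orientation of a triangular graph, no interior edge is directed
toward an exterior vertex. -/
theorem no_edge_to_exterior {n : ℕ} (T : PlaneTriangulation n)
    (O : Internal3Orientation T) (u v : Fin n) (h : O.dir u v) :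
    T.InteriorVertex v := by
  classical
  by_contra hv
  have hn3 : 3 ≤ n := by
    simpa using Fintype.card_le_of_injective T.outer T.outer_inj
  -- the set of directed interior edges
  set D : Finset (Fin n × Fin n) :=
    Finset.univ.filter (fun p => O.dir p.1 p.2) with hD
  -- fiber over a head vertex
  have hfiber : ∀ w : Fin n, (D.filter (fun p => p.2 = w)).card
      = (Finset.univ.filter (fun x => O.dir x w)).card := by
    intro w
    rw [show D.filter (fun p => p.2 = w)
        = (Finset.univ.filter (fun x => O.dir x w)).image (fun x => (x, w)) by
      ext p
      simp only [hD, Finset.mem_filter, Finset.mem_univ, true_and, Finset.mem_image]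
      constructor
      · rintro ⟨hd, h2⟩
        exact ⟨p.1, h2 ▸ hd, Prod.ext rfl h2.symm⟩
      · rintro ⟨x, hx, rfl⟩
        exact ⟨hx, rfl⟩]
    exact Finset.card_image_of_injective _ (fun a b hab => (Prod.mk.injEq _ _ _ _ ▸ hab).1)
  have hindeg : ∀ w : Fin n, T.InteriorVertex w →
      (D.filter (fun p => p.2 = w)).card = 3 := by
    intro w hw
    rw [hfiber w]
    have := O.indeg w hw
    rwa [Set.ncard_eq_toFinset_card', Set.toFinset_setOf] at this
  -- D.card as a sum of fibers
  have hsum : D.card = ∑ w : Fin n, (D.filter (fun p => p.2 = w)).card := by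
    exact Finset.card_eq_sum_card_fiberwise (fun p _ => Finset.mem_univ p.2)
  -- split the sum into interior and exterior vertices
  have hsplit :
      ∑ w : Fin n, (D.filter (fun p => p.2 = w)).card
      = (∑ w ∈ Finset.univ.filter (fun w => T.InteriorVertex w),
          (D.filter (fun p => p.2 = w)).card)
        + ∑ w ∈ Finset.univ.filter (fun w => ¬ T.InteriorVertex w),
          (D.filter (fun p => p.2 = w)).card := by
    exact (Finset.sum_filter_add_sum_filter_not _ _ _).symm
  -- interior vertex count
  have hIcard : (Finset.univ.filter (fun w => T.InteriorVertex w)).card = n - 3 := by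
    have : Finset.univ.filter (fun w => T.InteriorVertex w)
        = (Finset.univ.image T.outer)ᶜ := by
      ext w
      rw [Finset.mem_filter]
      simp [PlaneTriangulation.InteriorVertex, eq_comm]
    rw [this, Finset.card_compl, Finset.card_image_of_injective _ T.outer_inj]
    simp
  have hIsum : (∑ w ∈ Finset.univ.filter (fun w => T.InteriorVertex w),
      (D.filter (fun p => p.2 = w)).card) = 3 * (n - 3) := by
    rw [Finset.sum_congr rfl (fun w hw => hindeg w (Finset.mem_filter.mp hw).2),
      Finset.sum_const, hIcard, smul_eq_mul, Nat.mul_comm]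
  -- exterior contribution at least 1, coming from (u, v)
  have hXsum : 1 ≤ ∑ w ∈ Finset.univ.filter (fun w => ¬ T.InteriorVertex w),
      (D.filter (fun p => p.2 = w)).card := by
    have hvmem : v ∈ Finset.univ.filter (fun w => ¬ T.InteriorVertex w) := by
      simp [hv]
    have h1 : 1 ≤ (D.filter (fun p => p.2 = v)).card := by
      refine Finset.card_pos.mpr ⟨(u, v), ?_⟩
      simp [hD, h]
    exact le_trans h1 (Finset.single_le_sum
      (f := fun w => (D.filter (fun p => p.2 = w)).card) (fun w _ => Nat.zero_le _) hvmem)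
  have hDge : 3 * (n - 3) + 1 ≤ D.card := by
    rw [hsum, hsplit, hIsum]
    omega
  -- now count interior edges via Euler
  set S : Finset (Sym2 (Fin n)) := D.image (fun p => s(p.1, p.2)) with hS
  have hScard : S.card = D.card := by
    apply Finset.card_image_of_injOn
    rintro ⟨a, b⟩ hab ⟨c, d⟩ hcd he
    simp only [hD, Finset.mem_coe, Finset.mem_filter, Finset.mem_univ, true_and] at hab hcd
    rw [Sym2.mk_eq_mk_iff] at he
    rcases he with he | he
    · exact he
    · simp only [Prod.swap_prod_mk, Prod.mk.injEq] at he
      obtain ⟨rfl, rfl⟩ := he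
      exact absurd hcd (fun h' => O.not_both hab h')
  set OE : Finset (Sym2 (Fin n)) :=
    {s(T.outer 0, T.outer 1), s(T.outer 1, T.outer 2), s(T.outer 0, T.outer 2)} with hOE
  have houter_ne : ∀ i j : Fin 3, i ≠ j → T.outer i ≠ T.outer j :=
    fun i j hij he => hij (T.outer_inj he)
  have hOEcard : OE.card = 3 := by
    rw [hOE, Finset.card_insert_of_notMem, Finset.card_insert_of_notMem,
      Finset.card_singleton]
    · intro hm
      rcases (Sym2.mk_eq_mk_iff (p := (T.outer 1, T.outer 2)) (q := (T.outer 0, T.outer 2))).mp (Finset.mem_singleton.mp hm) with h' | h' <;>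
        obtain ⟨h1, h2⟩ := Prod.ext_iff.mp h' <;>
        first
        | exact absurd (T.outer_inj h1) (by decide)
        | exact absurd (T.outer_inj h2) (by decide)
    · intro hm
      rcases Finset.mem_insert.mp hm with hm' | hm' <;>
        [rcases (Sym2.mk_eq_mk_iff (p := (T.outer 0, T.outer 1)) (q := (T.outer 1, T.outer 2))).mp hm' with h' | h';
         rcases (Sym2.mk_eq_mk_iff (p := (T.outer 0, T.outer 1)) (q := (T.outer 0, T.outer 2))).mp (Finset.mem_singleton.mp hm') with h' | h'] <;>
        obtain ⟨h1, h2⟩ := Prod.ext_iff.mp h' <;>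
        first
        | exact absurd (T.outer_inj h1) (by decide)
        | exact absurd (T.outer_inj h2) (by decide)
  have hdisj : Disjoint S OE := by
    rw [Finset.disjoint_left]
    rintro e heS heOE
    simp only [hS, Finset.mem_image] at heS
    obtain ⟨⟨a, b⟩, hab, rfl⟩ := heS
    simp only [hD, Finset.mem_filter, Finset.mem_univ, true_and] at hab
    obtain ⟨_, hno⟩ := O.dir_edge a b hab
    apply hno
    simp only [hOE, Finset.mem_insert, Finset.mem_singleton, Sym2.mk_eq_mk_iff, Sym2.eq_iff,
      Prod.swap_prod_mk, Prod.mk.injEq] at heOE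
    rcases heOE with (⟨h1, h2⟩ | ⟨h1, h2⟩) | ((⟨h1, h2⟩ | ⟨h1, h2⟩) | (⟨h1, h2⟩ | ⟨h1, h2⟩)) <;>
      exact ⟨_, _, h1, h2⟩
  have hunion : S ∪ OE = T.G.edgeFinset := by
    ext e
    induction e with
    | _ a b =>
      simp only [Finset.mem_union, SimpleGraph.mem_edgeFinset, SimpleGraph.mem_edgeSet]
      constructor
      · rintro (heS | heOE)
        · simp only [hS, Finset.mem_image] at heS
          obtain ⟨⟨x, y⟩, hxy, he⟩ := heS
          simp only [hD, Finset.mem_filter, Finset.mem_univ, true_and] at hxy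
          have hadj := (O.dir_edge x y hxy).1
          rw [Sym2.eq_iff] at he
          rcases he with he | he <;>
            (simp only [Prod.swap_prod_mk, Prod.mk.injEq] at he;
             obtain ⟨rfl, rfl⟩ := he)
          · exact hadj
          · exact hadj.symm
        · simp only [hOE, Finset.mem_insert, Finset.mem_singleton, Sym2.mk_eq_mk_iff, Sym2.eq_iff,
            Prod.swap_prod_mk, Prod.mk.injEq] at heOE
          rcases heOE with (⟨h1, h2⟩ | ⟨h1, h2⟩) | ((⟨h1, h2⟩ | ⟨h1, h2⟩) | (⟨h1, h2⟩ | ⟨h1, h2⟩)) <;>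
            subst h1 <;> subst h2
          · exact T.outer_adj 0 1 (by decide)
          · exact (T.outer_adj 0 1 (by decide)).symm
          · exact T.outer_adj 1 2 (by decide)
          · exact (T.outer_adj 1 2 (by decide)).symm
          · exact T.outer_adj 0 2 (by decide)
          · exact (T.outer_adj 0 2 (by decide)).symm
      · intro hadj
        by_cases hout : ∃ i j, a = T.outer i ∧ b = T.outer j
        · right
          obtain ⟨i, j, rfl, rfl⟩ := hout
          have hij : i ≠ j := fun hij => hadj.ne (by rw [hij])
          simp only [hOE, Finset.mem_insert, Finset.mem_singleton, Sym2.mk_eq_mk_iff, Sym2.eq_iff,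
            Prod.swap_prod_mk, Prod.mk.injEq]
          fin_cases i <;> fin_cases j <;> simp_all <;> tauto
        · left
          have hie : T.InteriorEdge a b := ⟨hadj, hout⟩
          simp only [hS, Finset.mem_image]
          rcases O.some_dir hie with hd | hd
          · exact ⟨(a, b), by simp [hD, hd], rfl⟩
          · exact ⟨(b, a), by simp [hD, hd], Sym2.eq_swap⟩
  have hedgecard : T.G.edgeFinset.card = 3 * n - 6 := by
    have := T.euler
    rwa [Set.ncard_eq_toFinset_card'] at this
  have hfinal : D.card + 3 = 3 * n - 6 := by
    rw [← hedgecard, ← hunion, Finset.card_union_of_disjoint hdisj, hScard, hOEcard]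
  omega
end
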